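/- arXiv:2102.07158 — 5 statements merged into one kernel-verified Lean document; each statement's English description precedes it below -/
import Mathlib

section
/- Suppose ∇²f(x*) ⪰ μ* I for some μ* ≥ 0 and that μ* + λ > 0. For any x ∈ ℝ^d define the NEWTON-STAR step x⁺ = x − (∇²f(x*) + λ I)^{-1} ∇P(x). Then ‖x⁺ − x*‖ ≤ (ν / (2(μ* + λ))) · ((1/(nm)) Σ_{i=1}^n Σ_{j=1}^m ‖a_{ij}‖³) · ‖x − x*‖². -/
open MeasureTheory Filter
open scoped BigOperators

noncomputable section

abbrev Euc (d : ℕ) := EuclideanSpace ℝ (Fin d)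

/-- Real inner product on Euclidean space. -/
def rinner {d : ℕ} (a x : Euc d) : ℝ := inner ℝ a x

/-- The rank-one matrix `a aᵀ`. -/
def outerMat {d : ℕ} (a : Euc d) : Matrix (Fin d) (Fin d) ℝ := fun p q => a p * a q

/-- `(1/(nm)) ∑_{ij} c_{ij} a_{ij} a_{ij}ᵀ`. -/
def Hmat {n m d : ℕ} (a : Fin n → Fin m → Euc d) (c : Fin n → Fin m → ℝ) :
    Matrix (Fin d) (Fin d) ℝ :=
  ((n : ℝ) * m)⁻¹ • ∑ i, ∑ j, c i j • outerMat (a i j)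

/-- Matrix-vector multiplication as a map on Euclidean space. -/
def mulVecE {d : ℕ} (M : Matrix (Fin d) (Fin d) ℝ) (v : Euc d) : Euc d := WithLp.toLp 2 (M.mulVec v)

/-- The vector `h_i(y) = (φ''_{i1}(⟨a_{i1},y⟩), …, φ''_{im}(⟨a_{im},y⟩)) ∈ ℝ^m`. -/
def hvecOf {n m d : ℕ} (a : Fin n → Fin m → Euc d) (φ'' : Fin n → Fin m → ℝ → ℝ)
    (i : Fin n) (y : Euc d) : Euc m :=
  WithLp.toLp 2 (fun j => φ'' i j (rinner (a i j) y))

/-- Componentwise positive part on ℝ^m. -/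
def posPartE {m : ℕ} (v : Euc m) : Euc m := WithLp.toLp 2 (fun j => max (v j) 0)

lemma integral_sub_base (c dd : ℝ) : ∫ t in c..dd, (t - c) = (dd - c) ^ 2 / 2 := by
  have := intervalIntegral.integral_comp_sub_right (a := c) (b := dd) (fun t => t) c
  rw [this, integral_id]
  ring

lemma taylor_quad (f : ℝ → ℝ) (hf : ContDiff ℝ 2 f) (ν : ℝ)
    (hlip : ∀ s t, |deriv (deriv f) s - deriv (deriv f) t| ≤ ν * |s - t|)
    (a b : ℝ) :
    |deriv f b - deriv f a - deriv (deriv f) a * (b - a)| ≤ ν / 2 * (b - a) ^ 2 := by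
  set g := deriv f with hg
  have hg1 : ContDiff ℝ 1 g := by
    have := (contDiff_succ_iff_deriv (n := 1)).1 hf
    exact this.2.2
  have hgd : Differentiable ℝ g := ((contDiff_succ_iff_deriv (n := 0)).1 hg1).1
  have hgc : Continuous (deriv g) := ((contDiff_succ_iff_deriv (n := 0)).1 hg1).2.2.continuous
  have h1 : (∫ t in a..b, deriv g t) = g b - g a :=
    intervalIntegral.integral_deriv_eq_sub (fun t _ => hgd t)
      (hgc.intervalIntegrable a b)
  have h2 : (∫ t in a..b, deriv g a) = (b - a) * deriv g a := by
    simp [intervalIntegral.integral_const, smul_eq_mul]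
  have key : g b - g a - deriv g a * (b - a) = ∫ t in a..b, (deriv g t - deriv g a) := by
    rw [intervalIntegral.integral_sub (hgc.intervalIntegrable a b)
      (intervalIntegrable_const), h1, h2]
    ring
  rw [key]
  have hmono : ∀ c e : ℝ, c ≤ e → |∫ t in c..e, (deriv g t - deriv g a)| ≤
      ν / 2 * (e - a) ^ 2 - ν / 2 * (c - a) ^ 2 ∨ True := by
    intro c e hce; right; trivial
  rcases le_total a b with hab | hab
  · calc |∫ t in a..b, (deriv g t - deriv g a)| ≤ ∫ t in a..b, |deriv g t - deriv g a| := by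
          simpa using intervalIntegral.norm_integral_le_integral_norm (f := fun t => deriv g t - deriv g a) hab
    _ ≤ ∫ t in a..b, ν * (t - a) := by
          apply intervalIntegral.integral_mono_on hab
          · exact ((hgc.sub continuous_const).abs.intervalIntegrable a b)
          · exact ((continuous_const.mul (continuous_id.sub continuous_const)).intervalIntegrable a b)
          · intro t ht
            have := hlip t a
            rwa [abs_of_nonneg (by linarith [ht.1] : (0:ℝ) ≤ t - a)] at this
    _ = ν / 2 * (b - a) ^ 2 := by
          rw [intervalIntegral.integral_const_mul, integral_sub_base]; ring
  · calc |∫ t in a..b, (deriv g t - deriv g a)| = |∫ t in b..a, (deriv g t - deriv g a)| := by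
          rw [intervalIntegral.integral_symm, abs_neg]
    _ ≤ ∫ t in b..a, |deriv g t - deriv g a| := by
          simpa using intervalIntegral.norm_integral_le_integral_norm (f := fun t => deriv g t - deriv g a) hab
    _ ≤ ∫ t in b..a, ν * (a - t) := by
          apply intervalIntegral.integral_mono_on hab
          · exact ((hgc.sub continuous_const).abs.intervalIntegrable b a)
          · exact ((continuous_const.mul (continuous_const.sub continuous_id)).intervalIntegrable b a)
          · intro t ht
            have := hlip t a
            rwa [abs_of_nonpos (by linarith [ht.2] : t - a ≤ (0:ℝ)), neg_sub] at this
    _ = ν / 2 * (b - a) ^ 2 := by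
          have h3 : (∫ t in b..a, (a - t)) = (b - a) ^ 2 / 2 := by
            have e1 : ∀ t : ℝ, a - t = -(t - a) := fun t => by ring
            simp_rw [e1]
            rw [intervalIntegral.integral_neg, intervalIntegral.integral_symm a b,
              neg_neg, integral_sub_base]
          rw [intervalIntegral.integral_const_mul, h3]; ring

lemma hasGradientAt_P {n m d : ℕ} (lam : ℝ) (a : Fin n → Fin m → Euc d)
    (φ : Fin n → Fin m → ℝ → ℝ) (hsmooth : ∀ i j, ContDiff ℝ 2 (φ i j))
    (P : Euc d → ℝ)
    (hP : ∀ y, P y = ((n : ℝ) * m)⁻¹ * (∑ i, ∑ j, φ i j (rinner (a i j) y))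
        + lam / 2 * ‖y‖ ^ 2)
    (x : Euc d) :
    HasGradientAt P
      ((((n : ℝ) * m)⁻¹ • ∑ i, ∑ j, deriv (φ i j) (rinner (a i j) x) • a i j) + lam • x) x := by
  set G : Euc d := (((n : ℝ) * m)⁻¹ • ∑ i, ∑ j, deriv (φ i j) (rinner (a i j) x) • a i j)
      + lam • x with hG
  rw [hasGradientAt_iff_hasFDerivAt, show P = fun y => ((n : ℝ) * m)⁻¹ * (∑ i, ∑ j, φ i j (rinner (a i j) y)) + lam / 2 * ‖y‖ ^ 2 from funext hP]
  have hterm : ∀ i j, HasFDerivAt (fun y : Euc d => φ i j (rinner (a i j) y))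
      (deriv (φ i j) (rinner (a i j) x) • (innerSL ℝ (a i j))) x := by
    intro i j
    have h1 : HasFDerivAt (fun y : Euc d => rinner (a i j) y) (innerSL ℝ (a i j)) x :=
      (innerSL ℝ (a i j)).hasFDerivAt
    have h2 : HasDerivAt (φ i j) (deriv (φ i j) (rinner (a i j) x)) (rinner (a i j) x) :=
      ((hsmooth i j).differentiable (by norm_num) (rinner (a i j) x)).hasDerivAt
    exact h2.comp_hasFDerivAt x h1
  have hsum : HasFDerivAt (fun y : Euc d => ∑ i, ∑ j, φ i j (rinner (a i j) y))
      (∑ i, ∑ j, deriv (φ i j) (rinner (a i j) x) • (innerSL ℝ (a i j))) x := by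
    apply HasFDerivAt.fun_sum
    intro i _
    exact HasFDerivAt.fun_sum (fun j _ => hterm i j)
  have hns : HasFDerivAt (fun y : Euc d => ‖y‖ ^ 2) ((2:ℝ) • innerSL ℝ x) x := by
    have h0 := (hasFDerivAt_id (𝕜 := ℝ) x).norm_sq
    have he : ((2:ℕ) • ((innerSL ℝ x).comp (ContinuousLinearMap.id ℝ (Euc d))) : Euc d →L[ℝ] ℝ)
        = (2:ℝ) • innerSL ℝ x := by
      ext v; simp [two_smul]
    simp only [id_eq] at h0
    rw [he] at h0
    simpa using h0
  have hfull := (hsum.const_mul (((n : ℝ) * m)⁻¹)).add (hns.const_mul (lam / 2))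
  refine hfull.congr_fderiv ?_
  apply ContinuousLinearMap.ext
  intro v
  simp only [hG, InnerProductSpace.toDual_apply_apply, ContinuousLinearMap.add_apply,
    ContinuousLinearMap.smul_apply, ContinuousLinearMap.coe_sum', Finset.sum_apply,
    innerSL_apply_apply, inner_add_left, inner_smul_left, sum_inner, RCLike.star_def, map_sum,
    conj_trivial, smul_eq_mul]
  ring

lemma sum_mulVec' {d : ℕ} {ι : Type*} (s : Finset ι) (f : ι → Matrix (Fin d) (Fin d) ℝ)
    (v : Fin d → ℝ) : (∑ i ∈ s, f i).mulVec v = ∑ i ∈ s, (f i).mulVec v := by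
  classical
  induction s using Finset.induction_on with
  | empty => simp [Matrix.zero_mulVec]
  | insert _ _ hnot ih =>
    rw [Finset.sum_insert hnot, Finset.sum_insert hnot, Matrix.add_mulVec, ih]

lemma rinner_eq_dot {d : ℕ} (v w : Euc d) :
    rinner v w = dotProduct (v : Fin d → ℝ) (w : Fin d → ℝ) := by
  simp [rinner, PiLp.inner_apply, dotProduct, RCLike.inner_apply, mul_comm]

lemma outerMat_mulVec {d : ℕ} (a v : Euc d) :
    (outerMat a).mulVec v = rinner a v • (a : Fin d → ℝ) := by
  funext p
  simp [outerMat, Matrix.mulVec, dotProduct, rinner, PiLp.inner_apply, Finset.mul_sum,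
    mul_assoc, smul_eq_mul, mul_comm, mul_left_comm]

lemma mulVecE_Hmat {n m d : ℕ} (a : Fin n → Fin m → Euc d) (c : Fin n → Fin m → ℝ) (v : Euc d) :
    mulVecE (Hmat a c) v
      = ((n : ℝ) * m)⁻¹ • ∑ i, ∑ j, (c i j * rinner (a i j) v) • a i j := by
  apply WithLp.ofLp_injective 2
  simp only [mulVecE, WithLp.ofLp_toLp, WithLp.ofLp_smul, WithLp.ofLp_sum]
  rw [Hmat, Matrix.smul_mulVec]
  congr 1
  rw [show ((∑ i, ∑ j, c i j • outerMat (a i j)).mulVec v : Fin d → ℝ)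
      = ∑ i, ∑ j, (c i j • outerMat (a i j)).mulVec v from ?_]
  · refine Finset.sum_congr rfl fun i _ => Finset.sum_congr rfl fun j _ => ?_
    rw [Matrix.smul_mulVec, outerMat_mulVec]
    funext p
    simp [smul_eq_mul, mul_comm, mul_assoc, mul_left_comm]
  · rw [sum_mulVec']
    refine Finset.sum_congr rfl fun i _ => ?_
    rw [sum_mulVec']
lemma mulVecE_add {d : ℕ} (A B : Matrix (Fin d) (Fin d) ℝ) (v : Euc d) :
    mulVecE (A + B) v = mulVecE A v + mulVecE B v := by
  show WithLp.toLp 2 ((A + B).mulVec v) = WithLp.toLp 2 (A.mulVec v) + WithLp.toLp 2 (B.mulVec v)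
  rw [Matrix.add_mulVec, WithLp.toLp_add]

lemma mulVecE_smul_one {d : ℕ} (lam : ℝ) (v : Euc d) :
    mulVecE (lam • (1 : Matrix (Fin d) (Fin d) ℝ)) v = lam • v := by
  show WithLp.toLp 2 ((lam • (1 : Matrix (Fin d) (Fin d) ℝ)).mulVec v) = lam • v
  rw [Matrix.smul_mulVec, Matrix.one_mulVec, WithLp.toLp_smul]

section coercive
variable {d : ℕ} (A : Matrix (Fin d) (Fin d) ℝ) (μ lam : ℝ)
  (hpsd : (A - μ • (1 : Matrix (Fin d) (Fin d) ℝ)).PosSemidef)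
include hpsd

lemma coercive (v : Euc d) :
    (μ + lam) * ‖v‖ ^ 2 ≤ rinner v (mulVecE (A + lam • 1) v) := by
  have hA : A + lam • (1 : Matrix (Fin d) (Fin d) ℝ)
      = (A - μ • 1) + (μ + lam) • (1 : Matrix (Fin d) (Fin d) ℝ) := by
    rw [add_smul]; abel
  have h1 : rinner v (mulVecE (A + lam • 1) v)
      = rinner v (mulVecE (A - μ • 1) v) + (μ + lam) * rinner v v := by
    rw [hA, mulVecE_add, mulVecE_smul_one]
    rw [rinner, rinner, rinner, inner_add_right, inner_smul_right]
  have h2 : (0:ℝ) ≤ rinner v (mulVecE (A - μ • 1) v) := by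
    have h := hpsd.dotProduct_mulVec_nonneg (fun i => v i)
    rw [show star (fun i => v i) = (fun i => v i) from star_trivial _] at h
    rw [rinner_eq_dot]
    exact h
  have h3 : rinner v v = ‖v‖ ^ 2 := real_inner_self_eq_norm_sq v
  rw [h1, h3]
  linarith [h2]

lemma coercive_norm (hpos : 0 < μ + lam) (v : Euc d) :
    (μ + lam) * ‖v‖ ≤ ‖mulVecE (A + lam • 1) v‖ := by
  rcases eq_or_ne v 0 with rfl | hv
  · have : mulVecE (A + lam • 1) (0 : Euc d) = 0 := by
      show WithLp.toLp 2 ((A + lam • (1:Matrix (Fin d) (Fin d) ℝ)).mulVec 0) = 0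
      rw [Matrix.mulVec_zero]; rfl
    simp [this]
  · have h1 := coercive A μ lam hpsd v
    have h2 : rinner v (mulVecE (A + lam • 1) v) ≤ ‖v‖ * ‖mulVecE (A + lam • 1) v‖ :=
      real_inner_le_norm _ _
    have hvn : 0 < ‖v‖ := norm_pos_iff.2 hv
    have := h1.trans h2
    rw [pow_two] at this
    nlinarith

lemma M_isUnit (hpos : 0 < μ + lam) :
    IsUnit (A + lam • (1 : Matrix (Fin d) (Fin d) ℝ)) := by
  rw [← Matrix.mulVec_injective_iff_isUnit]
  intro v w hvw
  set u : Euc d := (WithLp.equiv 2 (Fin d → ℝ)).symm (v - w) with hu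
  have h := coercive_norm A μ lam hpsd hpos u
  have hz : mulVecE (A + lam • 1) u = 0 := by
    show WithLp.toLp 2 ((A + lam • (1 : Matrix (Fin d) (Fin d) ℝ)).mulVec (v - w)) = 0
    rw [Matrix.mulVec_sub, hvw, sub_self]; rfl
  rw [hz, norm_zero] at h
  have h0 : u = 0 := by
    by_contra hne
    have hp : 0 < ‖u‖ := norm_pos_iff.2 hne
    nlinarith [mul_pos hpos hp]
  have : v - w = 0 := congrArg WithLp.ofLp h0
  exact sub_eq_zero.1 this

lemma Minv_mulVec (hpos : 0 < μ + lam) (g : Euc d) :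
    mulVecE (A + lam • 1) (mulVecE (A + lam • 1)⁻¹ g) = g := by
  have hu := M_isUnit A μ lam hpsd hpos
  show WithLp.toLp 2 ((A + lam • 1).mulVec ((A + lam • 1)⁻¹.mulVec g)) = g
  rw [Matrix.mulVec_mulVec, Matrix.mul_nonsing_inv _ (Matrix.isUnit_iff_isUnit_det _ |>.1 hu),
    Matrix.one_mulVec]

lemma Minv_norm (hpos : 0 < μ + lam) (g : Euc d) :
    ‖mulVecE (A + lam • 1)⁻¹ g‖ ≤ (μ + lam)⁻¹ * ‖g‖ := by
  have h := coercive_norm A μ lam hpsd hpos (mulVecE (A + lam • 1)⁻¹ g)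
  rw [Minv_mulVec A μ lam hpsd hpos] at h
  rw [← mul_le_mul_iff_right₀ hpos, ← mul_assoc, mul_inv_cancel₀ hpos.ne', one_mul]
  exact h

lemma Minv_cancel (hpos : 0 < μ + lam) (u : Euc d) :
    mulVecE (A + lam • 1)⁻¹ (mulVecE (A + lam • 1) u) = u := by
  have hu := M_isUnit A μ lam hpsd hpos
  show WithLp.toLp 2 ((A + lam • 1)⁻¹.mulVec ((A + lam • 1).mulVec u)) = u
  rw [Matrix.mulVec_mulVec, Matrix.nonsing_inv_mul _ (Matrix.isUnit_iff_isUnit_det _ |>.1 hu),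
    Matrix.one_mulVec]
end coercive

/-- local quadratic convergence of NEWTON-STAR. -/
theorem newton_star_local_quadratic
    {n m d : ℕ} (hn : 0 < n) (hm : 0 < m) (hd : 0 < d)
    (ν γ lam μstar : ℝ) (hν : 0 ≤ ν) (hγ : 0 < γ) (hlam : 0 ≤ lam)
    (a : Fin n → Fin m → Euc d) (φ : Fin n → Fin m → ℝ → ℝ)
    (φ'' : Fin n → Fin m → ℝ → ℝ) (hφ'' : ∀ i j, φ'' i j = deriv (deriv (φ i j)))
    (hsmooth : ∀ i j, ContDiff ℝ 2 (φ i j))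
    (hbdd : ∀ i j t, |φ'' i j t| ≤ γ)
    (hlip : ∀ i j s t, |φ'' i j s - φ'' i j t| ≤ ν * |s - t|)
    (P : Euc d → ℝ)
    (hP : ∀ y, P y = ((n : ℝ) * m)⁻¹ * (∑ i, ∑ j, φ i j (rinner (a i j) y))
        + lam / 2 * ‖y‖ ^ 2)
    (xstar : Euc d) (hmin : ∀ y, P xstar ≤ P y)
    (hpsd : (Hmat a (fun i j => φ'' i j (rinner (a i j) xstar)) -
        μstar • (1 : Matrix (Fin d) (Fin d) ℝ)).PosSemidef)
    (hμ : 0 ≤ μstar) (hpos : 0 < μstar + lam)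
    (x xplus : Euc d)
    (hstep : xplus = x - mulVecE
        (Hmat a (fun i j => φ'' i j (rinner (a i j) xstar)) +
          lam • (1 : Matrix (Fin d) (Fin d) ℝ))⁻¹ (gradient P x)) :
    ‖xplus - xstar‖ ≤ ν / (2 * (μstar + lam)) *
      (((n : ℝ) * m)⁻¹ * ∑ i, ∑ j, ‖a i j‖ ^ 3) * ‖x - xstar‖ ^ 2 := by
  set κ : ℝ := ((n : ℝ) * m)⁻¹ with hκ
  have hκ0 : 0 ≤ κ := by positivity
  set H := Hmat a (fun i j => φ'' i j (rinner (a i j) xstar)) with hH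
  set M := H + lam • (1 : Matrix (Fin d) (Fin d) ℝ) with hM
  set u : Euc d := x - xstar with hu
  -- gradients
  have hgx : gradient P x
      = (κ • ∑ i, ∑ j, deriv (φ i j) (rinner (a i j) x) • a i j) + lam • x :=
    (hasGradientAt_P lam a φ hsmooth P hP x).gradient
  have hgstar : gradient P xstar
      = (κ • ∑ i, ∑ j, deriv (φ i j) (rinner (a i j) xstar) • a i j) + lam • xstar :=
    (hasGradientAt_P lam a φ hsmooth P hP xstar).gradient
  have hloc : IsLocalMin P xstar := Filter.Eventually.of_forall hmin
  have hgz : gradient P xstar = 0 := by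
    have h0 : fderiv ℝ P xstar = 0 := hloc.fderiv_eq_zero
    simp [gradient, h0]
  have hstar : (κ • ∑ i, ∑ j, deriv (φ i j) (rinner (a i j) xstar) • a i j) + lam • xstar
      = 0 := by rw [← hgstar]; exact hgz
  -- the error vector
  set e : Fin n → Fin m → ℝ := fun i j =>
    φ'' i j (rinner (a i j) xstar) * rinner (a i j) u
      - (deriv (φ i j) (rinner (a i j) x) - deriv (φ i j) (rinner (a i j) xstar)) with he
  have hMu : mulVecE M u
      = (κ • ∑ i, ∑ j, (φ'' i j (rinner (a i j) xstar) * rinner (a i j) u) • a i j)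
        + lam • u := by
    rw [hM, mulVecE_add, hH, mulVecE_Hmat, mulVecE_smul_one, hκ]
  have key : mulVecE M u - gradient P x = κ • ∑ i, ∑ j, e i j • a i j := by
    have hsplit : (∑ i, ∑ j, e i j • a i j)
        = (∑ i, ∑ j, (φ'' i j (rinner (a i j) xstar) * rinner (a i j) u) • a i j)
          - ((∑ i, ∑ j, deriv (φ i j) (rinner (a i j) x) • a i j)
            - (∑ i, ∑ j, deriv (φ i j) (rinner (a i j) xstar) • a i j)) := by
      rw [← Finset.sum_sub_distrib, ← Finset.sum_sub_distrib]
      refine Finset.sum_congr rfl fun i _ => ?_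
      rw [← Finset.sum_sub_distrib, ← Finset.sum_sub_distrib]
      refine Finset.sum_congr rfl fun j _ => ?_
      rw [he]
      rw [sub_smul, sub_smul]
    rw [hMu, hgx, hsplit, hu]
    linear_combination (norm := module) (-1 : ℝ) • hstar
  -- rewrite the step
  have hxplus : xplus - xstar = mulVecE M⁻¹ (mulVecE M u - gradient P x) := by
    have hcancel := Minv_cancel H μstar lam hpsd hpos u
    set g : Euc d := gradient P x with hg
    have hsub : mulVecE M⁻¹ (mulVecE M u - g)
        = mulVecE M⁻¹ (mulVecE M u) - mulVecE M⁻¹ g := by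
      show WithLp.toLp 2 (M⁻¹.mulVec (WithLp.ofLp (mulVecE M u - g)))
        = WithLp.toLp 2 (M⁻¹.mulVec (WithLp.ofLp (mulVecE M u))) - WithLp.toLp 2 (M⁻¹.mulVec (WithLp.ofLp g))
      rw [WithLp.ofLp_sub, Matrix.mulVec_sub, WithLp.toLp_sub]
    rw [hsub, hcancel, hstep, hu]
    abel
  -- bound each coefficient
  have hebound : ∀ i j, |e i j| ≤ ν / 2 * (‖a i j‖ ^ 2 * ‖u‖ ^ 2) := by
    intro i j
    have hlip' : ∀ s t : ℝ, |deriv (deriv (φ i j)) s - deriv (deriv (φ i j)) t|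
        ≤ ν * |s - t| := by
      intro s t; have := hlip i j s t; rwa [hφ''] at this
    have ht := taylor_quad (φ i j) (hsmooth i j) ν hlip'
      (rinner (a i j) xstar) (rinner (a i j) x)
    have hdiff : rinner (a i j) x - rinner (a i j) xstar = rinner (a i j) u := by
      rw [hu]; simp [rinner, inner_sub_right]
    rw [hdiff] at ht
    have he2 : |e i j| = |deriv (φ i j) (rinner (a i j) x) - deriv (φ i j) (rinner (a i j) xstar)
        - deriv (deriv (φ i j)) (rinner (a i j) xstar) * rinner (a i j) u| := by
      rw [he, ← hφ'']
      rw [abs_sub_comm]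
    rw [he2]
    refine ht.trans ?_
    have hca : |rinner (a i j) u| ≤ ‖a i j‖ * ‖u‖ := abs_real_inner_le_norm _ _
    have h2 : rinner (a i j) u ^ 2 ≤ ‖a i j‖ ^ 2 * ‖u‖ ^ 2 := by
      rw [← mul_pow]
      calc rinner (a i j) u ^ 2 = |rinner (a i j) u| ^ 2 := (sq_abs _).symm
      _ ≤ (‖a i j‖ * ‖u‖) ^ 2 := by
          apply pow_le_pow_left₀ (abs_nonneg _) hca
    nlinarith [h2]
  -- norm of the residual
  have hrnorm : ‖mulVecE M u - gradient P x‖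
      ≤ ν / 2 * ‖u‖ ^ 2 * (κ * ∑ i, ∑ j, ‖a i j‖ ^ 3) := by
    rw [key, norm_smul, Real.norm_eq_abs, abs_of_nonneg hκ0]
    have hsum : ‖∑ i, ∑ j, e i j • a i j‖ ≤ ∑ i, ∑ j, ν / 2 * ‖u‖ ^ 2 * ‖a i j‖ ^ 3 := by
      refine (norm_sum_le _ _).trans ?_
      refine Finset.sum_le_sum fun i _ => ?_
      refine (norm_sum_le _ _).trans ?_
      refine Finset.sum_le_sum fun j _ => ?_
      rw [norm_smul, Real.norm_eq_abs]
      calc |e i j| * ‖a i j‖ ≤ (ν / 2 * (‖a i j‖ ^ 2 * ‖u‖ ^ 2)) * ‖a i j‖ :=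
            mul_le_mul_of_nonneg_right (hebound i j) (norm_nonneg _)
      _ = ν / 2 * ‖u‖ ^ 2 * ‖a i j‖ ^ 3 := by ring
    calc κ * ‖∑ i, ∑ j, e i j • a i j‖ ≤ κ * ∑ i, ∑ j, ν / 2 * ‖u‖ ^ 2 * ‖a i j‖ ^ 3 :=
          mul_le_mul_of_nonneg_left hsum hκ0
    _ = ν / 2 * ‖u‖ ^ 2 * (κ * ∑ i, ∑ j, ‖a i j‖ ^ 3) := by
        simp_rw [← Finset.mul_sum]
        ring
  -- conclude
  rw [hxplus]
  have hinv := Minv_norm H μstar lam hpsd hpos (mulVecE M u - gradient P x)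
  rw [← hM] at hinv
  have hstep2 : (μstar + lam)⁻¹ * ‖mulVecE M u - gradient P x‖
      ≤ (μstar + lam)⁻¹ * (ν / 2 * ‖u‖ ^ 2 * (κ * ∑ i, ∑ j, ‖a i j‖ ^ 3)) :=
    mul_le_mul_of_nonneg_left hrnorm (by positivity)
  refine (hinv.trans hstep2).trans (le_of_eq ?_)
  field_simp
end
end

section
/- Assume each φ_{ij} is convex (so every entry of h_i(x*) is nonnegative). Let ω ≥ 0 and 0 < η ≤ 1/(ω+1). Fix x ∈ ℝ^d and vectors h_1, …, h_n ∈ ℝ^m, and let g_1, …, g_n : Ω → ℝ^m be random vectors on a probability space (Ω, F, ℙ) satisfying E[g_i] = h_i(x) − h_i and E‖g_i‖² ≤ (ω+1)‖h_i(x) − h_i‖² for each i. Then E[ Σ_{i=1}^n ‖[h_i + η g_i]_+ − h_i(x*)‖² ] ≤ (1−η) Σ_{i=1}^n ‖h_i − h_i(x*)‖² + η ν² S² ‖x − x*‖², where S² = Σ_{i=1}^n Σ_{j=1}^m ‖a_{ij}‖² and [·]_+ denotes the componentwise positive part. -/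
open MeasureTheory Filter
open scoped BigOperators

noncomputable section

open Topology in
lemma aux_mono_deriv_nonneg {f : ℝ → ℝ} (hf : Monotone f) (t : ℝ)
    (hd : DifferentiableAt ℝ f t) : 0 ≤ deriv f t := by
  have h1 : Tendsto (slope f t) (𝓝[>] t) (𝓝 (deriv f t)) :=
    (hasDerivAt_iff_tendsto_slope.mp hd.hasDerivAt).mono_left
      (nhdsWithin_mono _ (fun y hy => by
        simp only [Set.mem_compl_iff, Set.mem_singleton_iff]; exact ne_of_gt hy))
  refine ge_of_tendsto h1 ?_
  filter_upwards [self_mem_nhdsWithin] with y hy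
  have : (0:ℝ) ≤ (f y - f t) / (y - t) :=
    div_nonneg (sub_nonneg.mpr (hf (le_of_lt hy))) (sub_nonneg.mpr (le_of_lt hy))
  simpa [slope_def_field, div_eq_mul_inv] using this

lemma aux_euc_norm_sq {m : ℕ} (v : Euc m) : ‖v‖ ^ 2 = ∑ j, (v j) ^ 2 := by
  rw [EuclideanSpace.norm_eq, Real.sq_sqrt (Finset.sum_nonneg fun j _ => sq_nonneg _)]
  simp [Real.norm_eq_abs, sq_abs]

lemma aux_posPart_bound {m : ℕ} (v w : Euc m) (hw : ∀ j, 0 ≤ w j) :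
    ‖posPartE v - w‖ ^ 2 ≤ ‖v - w‖ ^ 2 := by
  rw [aux_euc_norm_sq, aux_euc_norm_sq]
  refine Finset.sum_le_sum fun j _ => ?_
  have h1 : (posPartE v - w) j = max (v j) 0 - w j := by rw [PiLp.sub_apply]; rfl
  have h2 : (v - w) j = v j - w j := rfl
  rw [h1, h2]
  rcases le_total (v j) 0 with hv | hv
  · rw [max_eq_right hv]; nlinarith [hw j]
  · rw [max_eq_left hv]

lemma aux_int_expand {m : ℕ} {Ω : Type*} [MeasurableSpace Ω] (ℙ : Measure Ω)
    [IsProbabilityMeasure ℙ] (η : ℝ) (u : Euc m) (g : Ω → Euc m)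
    (hgint : Integrable g ℙ) (hgsqint : Integrable (fun t => ‖g t‖ ^ 2) ℙ) :
    Integrable (fun t => ‖u + η • g t‖ ^ 2) ℙ ∧
    (∫ t, ‖u + η • g t‖ ^ 2 ∂ℙ)
      = ‖u‖^2 + 2 * η * (inner ℝ u (∫ t, g t ∂ℙ) : ℝ) + η^2 * ∫ t, ‖g t‖^2 ∂ℙ := by
  have key : ∀ t, ‖u + η • g t‖ ^ 2
      = ‖u‖^2 + 2 * η * (inner ℝ u (g t) : ℝ) + η^2 * ‖g t‖^2 := by
    intro t
    rw [norm_add_sq_real, inner_smul_right, norm_smul, mul_pow]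
    simp [Real.norm_eq_abs, sq_abs]
    ring
  have i1 : Integrable (fun t => 2 * η * (inner ℝ u (g t) : ℝ)) ℙ :=
    (hgint.const_inner u).const_mul _
  have i2 : Integrable (fun t => η^2 * ‖g t‖^2) ℙ := hgsqint.const_mul _
  constructor
  · simp_rw [key]
    exact ((integrable_const _).add i1).add i2
  · simp_rw [key]
    have i0 : Integrable (fun t => ‖u‖^2 + 2 * η * (inner ℝ u (g t) : ℝ)) ℙ :=
      (integrable_const _).add i1
    rw [integral_add i0 i2, integral_add (integrable_const _) i1,
      integral_const, integral_const_mul, integral_const_mul, integral_inner hgint]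
    simp

/-- one step of the NL1 learning procedure (Lemma on ℋ^k, with positive part). -/
theorem nl1_learning_step
    {n m d : ℕ} (hn : 0 < n) (hm : 0 < m) (hd : 0 < d)
    (ν γ lam : ℝ) (hν : 0 ≤ ν) (hγ : 0 < γ) (hlam : 0 ≤ lam)
    (a : Fin n → Fin m → Euc d) (φ : Fin n → Fin m → ℝ → ℝ)
    (φ'' : Fin n → Fin m → ℝ → ℝ) (hφ'' : ∀ i j, φ'' i j = deriv (deriv (φ i j)))
    (hsmooth : ∀ i j, ContDiff ℝ 2 (φ i j))
    (hbdd : ∀ i j t, |φ'' i j t| ≤ γ)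
    (hlip : ∀ i j s t, |φ'' i j s - φ'' i j t| ≤ ν * |s - t|)
    (hconv : ∀ i j, ConvexOn ℝ Set.univ (φ i j))
    (P : Euc d → ℝ)
    (hP : ∀ y, P y = ((n : ℝ) * m)⁻¹ * (∑ i, ∑ j, φ i j (rinner (a i j) y))
        + lam / 2 * ‖y‖ ^ 2)
    (xstar : Euc d) (hmin : ∀ y, P xstar ≤ P y)
    (ωc η : ℝ) (hωc : 0 ≤ ωc) (hη0 : 0 < η) (hη : η ≤ 1 / (ωc + 1))
    (x : Euc d) (h : Fin n → Euc m)
    (Ω : Type*) [MeasurableSpace Ω] (ℙ : Measure Ω) [IsProbabilityMeasure ℙ]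
    (g : Fin n → Ω → Euc m)
    (hgint : ∀ i, Integrable (g i) ℙ)
    (hgsqint : ∀ i, Integrable (fun t => ‖g i t‖ ^ 2) ℙ)
    (hgmean : ∀ i, (∫ t, g i t ∂ℙ) = hvecOf a φ'' i x - h i)
    (hgvar : ∀ i, (∫ t, ‖g i t‖ ^ 2 ∂ℙ) ≤ (ωc + 1) * ‖hvecOf a φ'' i x - h i‖ ^ 2) :
    (∫ t, (∑ i, ‖posPartE (h i + η • g i t) - hvecOf a φ'' i xstar‖ ^ 2) ∂ℙ) ≤
      (1 - η) * ∑ i, ‖h i - hvecOf a φ'' i xstar‖ ^ 2 +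
        η * ν ^ 2 * (∑ i, ∑ j, ‖a i j‖ ^ 2) * ‖x - xstar‖ ^ 2 := by
  set hs : Fin n → Euc m := fun i => hvecOf a φ'' i xstar with hhs
  set hx : Fin n → Euc m := fun i => hvecOf a φ'' i x with hhx
  set u : Fin n → Euc m := fun i => h i - hs i with hu
  set w : Fin n → Euc m := fun i => hx i - h i with hw
  -- φ'' nonneg
  have hphi_nonneg : ∀ i j t, 0 ≤ φ'' i j t := by
    intro i j t
    have h2 : ContDiff ℝ ((1:ℕ) + 1) (φ i j) := by exact_mod_cast hsmooth i j
    have h1 : ContDiff ℝ 1 (deriv (φ i j)) := (contDiff_succ_iff_deriv.mp h2).2.2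
    have hdf : Differentiable ℝ (φ i j) := h2.differentiable (by norm_num)
    have hmono : Monotone (deriv (φ i j)) := by
      have hmo := (hconv i j).monotoneOn_deriv (fun y _ => hdf y)
      intro p q hpq
      exact hmo (Set.mem_univ p) (Set.mem_univ q) hpq
    rw [hφ'' i j]
    exact aux_mono_deriv_nonneg hmono t ((h1.differentiable (by norm_num)) t)
  have hs_nonneg : ∀ i j, 0 ≤ hs i j := fun i j => hphi_nonneg i j (rinner (a i j) xstar)
  -- Lipschitz bound on ‖hx i - hs i‖²
  have hlipbd : ∀ i, ‖hx i - hs i‖ ^ 2 ≤ ν ^ 2 * (∑ j, ‖a i j‖ ^ 2) * ‖x - xstar‖ ^ 2 := by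
    intro i
    rw [aux_euc_norm_sq]
    have step : ∀ j, ((hx i - hs i) j) ^ 2 ≤ ν ^ 2 * ‖a i j‖ ^ 2 * ‖x - xstar‖ ^ 2 := by
      intro j
      have he : (hx i - hs i) j
          = φ'' i j (rinner (a i j) x) - φ'' i j (rinner (a i j) xstar) := by rw [PiLp.sub_apply]; rfl
      have hr : rinner (a i j) x - rinner (a i j) xstar = rinner (a i j) (x - xstar) := by
        simp [rinner, inner_sub_right]
      have h1 : |(hx i - hs i) j| ≤ ν * |rinner (a i j) (x - xstar)| := by
        rw [he, ← hr]; exact hlip i j _ _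
      have h2 : |rinner (a i j) (x - xstar)| ≤ ‖a i j‖ * ‖x - xstar‖ :=
        abs_real_inner_le_norm _ _
      calc ((hx i - hs i) j) ^ 2 = |(hx i - hs i) j| ^ 2 := (sq_abs _).symm
        _ ≤ (ν * |rinner (a i j) (x - xstar)|) ^ 2 :=
            pow_le_pow_left₀ (abs_nonneg _) h1 2
        _ = ν ^ 2 * |rinner (a i j) (x - xstar)| ^ 2 := by ring
        _ ≤ ν ^ 2 * (‖a i j‖ * ‖x - xstar‖) ^ 2 :=
            mul_le_mul_of_nonneg_left (pow_le_pow_left₀ (abs_nonneg _) h2 2) (sq_nonneg ν)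
        _ = ν ^ 2 * ‖a i j‖ ^ 2 * ‖x - xstar‖ ^ 2 := by ring
    calc ∑ j, ((hx i - hs i) j) ^ 2 ≤ ∑ j, ν ^ 2 * ‖a i j‖ ^ 2 * ‖x - xstar‖ ^ 2 :=
          Finset.sum_le_sum fun j _ => step j
      _ = ν ^ 2 * (∑ j, ‖a i j‖ ^ 2) * ‖x - xstar‖ ^ 2 := by
          rw [Finset.mul_sum, Finset.sum_mul]
  -- per-i integral expansion
  have hexp := fun i => aux_int_expand ℙ η (u i) (g i) (hgint i) (hgsqint i)
  have hGint : ∀ i, Integrable (fun t => ‖u i + η • g i t‖ ^ 2) ℙ := fun i => (hexp i).1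
  have hη1 : η * (ωc + 1) ≤ 1 := by
    rw [le_div_iff₀ (by linarith : (0:ℝ) < ωc + 1)] at hη
    exact hη
  have hGbound : ∀ i, (∫ t, ‖u i + η • g i t‖ ^ 2 ∂ℙ)
      ≤ (1 - η) * ‖u i‖ ^ 2 + η * (ν ^ 2 * (∑ j, ‖a i j‖ ^ 2) * ‖x - xstar‖ ^ 2) := by
    intro i
    have hval := (hexp i).2
    rw [hgmean i] at hval
    have hwi : hvecOf a φ'' i x - h i = w i := rfl
    rw [hwi] at hval
    have hVnn : 0 ≤ ∫ t, ‖g i t‖ ^ 2 ∂ℙ :=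
      integral_nonneg fun t => sq_nonneg _
    have hVle : (∫ t, ‖g i t‖ ^ 2 ∂ℙ) ≤ (ωc + 1) * ‖w i‖ ^ 2 := by
      have := hgvar i; rwa [hwi] at this
    have hsq : η ^ 2 * (∫ t, ‖g i t‖ ^ 2 ∂ℙ) ≤ η * ‖w i‖ ^ 2 := by
      have e1 : η ^ 2 * (∫ t, ‖g i t‖ ^ 2 ∂ℙ) ≤ η ^ 2 * ((ωc + 1) * ‖w i‖ ^ 2) :=
        mul_le_mul_of_nonneg_left hVle (sq_nonneg η)
      have e2 : η * (η * (ωc + 1)) ≤ η * 1 := mul_le_mul_of_nonneg_left hη1 hη0.le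
      nlinarith [sq_nonneg (‖w i‖), norm_nonneg (w i)]
    have hns : ‖u i + w i‖ ^ 2 = ‖u i‖ ^ 2 + 2 * (inner ℝ (u i) (w i) : ℝ) + ‖w i‖ ^ 2 :=
      norm_add_sq_real _ _
    have huw : u i + w i = hx i - hs i := by
      simp only [hu, hw]; abel
    calc (∫ t, ‖u i + η • g i t‖ ^ 2 ∂ℙ)
        = ‖u i‖ ^ 2 + 2 * η * (inner ℝ (u i) (w i) : ℝ)
            + η ^ 2 * ∫ t, ‖g i t‖ ^ 2 ∂ℙ := hval
      _ ≤ ‖u i‖ ^ 2 + 2 * η * (inner ℝ (u i) (w i) : ℝ) + η * ‖w i‖ ^ 2 := by linarith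
      _ = (1 - η) * ‖u i‖ ^ 2 + η * ‖u i + w i‖ ^ 2 := by rw [hns]; ring
      _ ≤ (1 - η) * ‖u i‖ ^ 2 + η * (ν ^ 2 * (∑ j, ‖a i j‖ ^ 2) * ‖x - xstar‖ ^ 2) := by
          rw [huw]
          exact add_le_add_right (mul_le_mul_of_nonneg_left (hlipbd i) hη0.le) _
  -- pointwise bound
  have hpt : ∀ t, (∑ i, ‖posPartE (h i + η • g i t) - hs i‖ ^ 2)
      ≤ ∑ i, ‖u i + η • g i t‖ ^ 2 := by
    intro t
    refine Finset.sum_le_sum fun i _ => ?_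
    have hrw : h i + η • g i t - hs i = u i + η • g i t := by
      simp only [hu]; abel
    calc ‖posPartE (h i + η • g i t) - hs i‖ ^ 2
        ≤ ‖h i + η • g i t - hs i‖ ^ 2 := aux_posPart_bound _ _ (hs_nonneg i)
      _ = ‖u i + η • g i t‖ ^ 2 := by rw [hrw]
  have hGsum : Integrable (fun t => ∑ i, ‖u i + η • g i t‖ ^ 2) ℙ :=
    integrable_finset_sum _ fun i _ => hGint i
  calc (∫ t, (∑ i, ‖posPartE (h i + η • g i t) - hs i‖ ^ 2) ∂ℙ)
      ≤ ∫ t, (∑ i, ‖u i + η • g i t‖ ^ 2) ∂ℙ := by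
        refine integral_mono_of_nonneg ?_ hGsum ?_
        · exact Filter.Eventually.of_forall fun t =>
            Finset.sum_nonneg fun i _ => sq_nonneg _
        · exact Filter.Eventually.of_forall hpt
    _ = ∑ i, ∫ t, ‖u i + η • g i t‖ ^ 2 ∂ℙ :=
        integral_finset_sum _ fun i _ => hGint i
    _ ≤ ∑ i, ((1 - η) * ‖u i‖ ^ 2 + η * (ν ^ 2 * (∑ j, ‖a i j‖ ^ 2) * ‖x - xstar‖ ^ 2)) :=
        Finset.sum_le_sum fun i _ => hGbound i
    _ = (1 - η) * ∑ i, ‖h i - hs i‖ ^ 2 +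
        η * ν ^ 2 * (∑ i, ∑ j, ‖a i j‖ ^ 2) * ‖x - xstar‖ ^ 2 := by
        have hterm : ∀ i : Fin n, η * (ν ^ 2 * (∑ j, ‖a i j‖ ^ 2) * ‖x - xstar‖ ^ 2)
            = (η * ν ^ 2 * ‖x - xstar‖ ^ 2) * ∑ j, ‖a i j‖ ^ 2 := fun i => by ring
        simp_rw [hterm]
        rw [Finset.sum_add_distrib, ← Finset.mul_sum, ← Finset.mul_sum]
        simp only [hu]
        ring
end
end

section
/- Let ω ≥ 0 and 0 < η ≤ 1/(ω+1). Fix x ∈ ℝ^d and vectors h_1, …, h_n ∈ ℝ^m, and let g_1, …, g_n : Ω → ℝ^m be random vectors on a probability space (Ω, F, ℙ) satisfying E[g_i] = h_i(x) − h_i and E‖g_i‖² ≤ (ω+1)‖h_i(x) − h_i‖² for each i. Then E[ Σ_{i=1}^n ‖(h_i + η g_i) − h_i(x*)‖² ] ≤ (1−η) Σ_{i=1}^n ‖h_i − h_i(x*)‖² + m n η ν² R² ‖x − x*‖². -/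
open MeasureTheory Filter
open scoped BigOperators

noncomputable section

/-- one step of the NL2 learning procedure (Lemma on ℋ^k, no positive part). -/
theorem nl2_learning_step
    {n m d : ℕ} (hn : 0 < n) (hm : 0 < m) (hd : 0 < d)
    (ν γ lam R : ℝ) (hν : 0 ≤ ν) (hγ : 0 < γ) (hlam : 0 ≤ lam)
    (a : Fin n → Fin m → Euc d) (φ : Fin n → Fin m → ℝ → ℝ)
    (φ'' : Fin n → Fin m → ℝ → ℝ) (hφ'' : ∀ i j, φ'' i j = deriv (deriv (φ i j)))
    (hsmooth : ∀ i j, ContDiff ℝ 2 (φ i j))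
    (hbdd : ∀ i j t, |φ'' i j t| ≤ γ)
    (hlip : ∀ i j s t, |φ'' i j s - φ'' i j t| ≤ ν * |s - t|)
    (hRub : ∀ i j, ‖a i j‖ ≤ R) (hRmem : ∃ i j, R = ‖a i j‖)
    (P : Euc d → ℝ)
    (hP : ∀ y, P y = ((n : ℝ) * m)⁻¹ * (∑ i, ∑ j, φ i j (rinner (a i j) y))
        + lam / 2 * ‖y‖ ^ 2)
    (xstar : Euc d) (hmin : ∀ y, P xstar ≤ P y)
    (ωc η : ℝ) (hωc : 0 ≤ ωc) (hη0 : 0 < η) (hη : η ≤ 1 / (ωc + 1))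
    (x : Euc d) (h : Fin n → Euc m)
    (Ω : Type*) [MeasurableSpace Ω] (ℙ : Measure Ω) [IsProbabilityMeasure ℙ]
    (g : Fin n → Ω → Euc m)
    (hgint : ∀ i, Integrable (g i) ℙ)
    (hgsqint : ∀ i, Integrable (fun t => ‖g i t‖ ^ 2) ℙ)
    (hgmean : ∀ i, (∫ t, g i t ∂ℙ) = hvecOf a φ'' i x - h i)
    (hgvar : ∀ i, (∫ t, ‖g i t‖ ^ 2 ∂ℙ) ≤ (ωc + 1) * ‖hvecOf a φ'' i x - h i‖ ^ 2) :
    (∫ t, (∑ i, ‖(h i + η • g i t) - hvecOf a φ'' i xstar‖ ^ 2) ∂ℙ) ≤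
      (1 - η) * ∑ i, ‖h i - hvecOf a φ'' i xstar‖ ^ 2 +
        (m : ℝ) * n * η * ν ^ 2 * R ^ 2 * ‖x - xstar‖ ^ 2 := by
  classical
  set u : Fin n → Euc m := fun i => h i - hvecOf a φ'' i xstar with hu
  set v : Fin n → Euc m := fun i => hvecOf a φ'' i x - h i with hv
  have hR0 : 0 ≤ R := le_trans (norm_nonneg _) (hRub ⟨0, hn⟩ ⟨0, hm⟩)
  have hηω : η * (ωc + 1) ≤ 1 := by
    have hpos : (0:ℝ) < ωc + 1 := by linarith
    rw [le_div_iff₀ hpos] at hη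
    linarith
  -- pointwise expansion
  have hpt : ∀ i t, ‖(h i + η • g i t) - hvecOf a φ'' i xstar‖ ^ 2
      = ‖u i‖ ^ 2 + 2 * η * (inner ℝ (u i) (g i t) : ℝ) + η ^ 2 * ‖g i t‖ ^ 2 := by
    intro i t
    have e1 : (h i + η • g i t) - hvecOf a φ'' i xstar = u i + η • g i t := by
      simp only [hu]; abel
    rw [e1, norm_add_sq_real, real_inner_smul_right, norm_smul]
    have : ‖η‖ ^ 2 = η ^ 2 := by rw [Real.norm_eq_abs, sq_abs]
    rw [mul_pow, this]; ring
  -- integrability of each summand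
  have hI : ∀ i, Integrable (fun t => ‖(h i + η • g i t) - hvecOf a φ'' i xstar‖ ^ 2) ℙ := by
    intro i
    have : (fun t => ‖(h i + η • g i t) - hvecOf a φ'' i xstar‖ ^ 2)
        = fun t => ‖u i‖ ^ 2 + 2 * η * (inner ℝ (u i) (g i t) : ℝ) + η ^ 2 * ‖g i t‖ ^ 2 := by
      funext t; exact hpt i t
    rw [this]
    exact ((integrable_const _).add (((hgint i).const_inner (u i)).const_mul _)).add
      ((hgsqint i).const_mul _)
  -- the per-i integral bound
  have hbound : ∀ i, (∫ t, ‖(h i + η • g i t) - hvecOf a φ'' i xstar‖ ^ 2 ∂ℙ)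
      ≤ (1 - η) * ‖u i‖ ^ 2 + η * ‖u i + v i‖ ^ 2 := by
    intro i
    have hInt : (∫ t, ‖(h i + η • g i t) - hvecOf a φ'' i xstar‖ ^ 2 ∂ℙ)
        = ‖u i‖ ^ 2 + 2 * η * (inner ℝ (u i) (v i) : ℝ) + η ^ 2 * (∫ t, ‖g i t‖ ^ 2 ∂ℙ) := by
      simp only [hpt]
      have hA : Integrable (fun t => 2 * η * (inner ℝ (u i) (g i t) : ℝ)) ℙ :=
        ((hgint i).const_inner (u i)).const_mul _
      have hB : Integrable (fun t => η ^ 2 * ‖g i t‖ ^ 2) ℙ := (hgsqint i).const_mul _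
      have hC : Integrable (fun t => ‖u i‖ ^ 2 + 2 * η * (inner ℝ (u i) (g i t) : ℝ)) ℙ :=
        (integrable_const _).add hA
      rw [integral_add hC hB, integral_add (integrable_const _) hA,
        integral_const, integral_const_mul, integral_const_mul,
        integral_inner (hgint i) (u i), hgmean i]
      simp [hv]
    rw [hInt]
    have hvar : η ^ 2 * (∫ t, ‖g i t‖ ^ 2 ∂ℙ) ≤ η * ‖v i‖ ^ 2 := by
      have h1 : η ^ 2 * (∫ t, ‖g i t‖ ^ 2 ∂ℙ) ≤ η ^ 2 * ((ωc + 1) * ‖v i‖ ^ 2) := by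
        apply mul_le_mul_of_nonneg_left _ (sq_nonneg η)
        have := hgvar i
        simpa [hv] using this
      have h2 : η ^ 2 * ((ωc + 1) * ‖v i‖ ^ 2) ≤ η * ‖v i‖ ^ 2 := by
        have : η * (η * (ωc + 1)) ≤ η * 1 :=
          mul_le_mul_of_nonneg_left hηω (le_of_lt hη0)
        calc η ^ 2 * ((ωc + 1) * ‖v i‖ ^ 2) = (η * (η * (ωc + 1))) * ‖v i‖ ^ 2 := by ring
          _ ≤ (η * 1) * ‖v i‖ ^ 2 := mul_le_mul_of_nonneg_right this (sq_nonneg _)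
          _ = η * ‖v i‖ ^ 2 := by ring
      linarith
    have hexp : (1 - η) * ‖u i‖ ^ 2 + η * ‖u i + v i‖ ^ 2
        = ‖u i‖ ^ 2 + 2 * η * (inner ℝ (u i) (v i) : ℝ) + η * ‖v i‖ ^ 2 := by
      rw [norm_add_sq_real]; ring
    linarith
  -- componentwise Lipschitz bound
  have hcomp : ∀ i, ‖u i + v i‖ ^ 2 ≤ (m : ℝ) * (ν ^ 2 * R ^ 2 * ‖x - xstar‖ ^ 2) := by
    intro i
    have huv : u i + v i = hvecOf a φ'' i x - hvecOf a φ'' i xstar := by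
      simp only [hu, hv]; abel
    rw [huv]
    have hnormsq : ‖hvecOf a φ'' i x - hvecOf a φ'' i xstar‖ ^ 2
        = ∑ j, ‖(hvecOf a φ'' i x - hvecOf a φ'' i xstar) j‖ ^ 2 := by
      rw [EuclideanSpace.norm_eq, Real.sq_sqrt]
      exact Finset.sum_nonneg fun j _ => sq_nonneg _
    rw [hnormsq]
    calc ∑ j, ‖(hvecOf a φ'' i x - hvecOf a φ'' i xstar) j‖ ^ 2
        ≤ ∑ j : Fin m, (ν ^ 2 * R ^ 2 * ‖x - xstar‖ ^ 2) := by
          apply Finset.sum_le_sum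
          intro j _
          have hj : (hvecOf a φ'' i x - hvecOf a φ'' i xstar) j
              = φ'' i j (rinner (a i j) x) - φ'' i j (rinner (a i j) xstar) := by simp [hvecOf]
          rw [hj]
          have h1 : |φ'' i j (rinner (a i j) x) - φ'' i j (rinner (a i j) xstar)|
              ≤ ν * |rinner (a i j) x - rinner (a i j) xstar| := hlip i j _ _
          have h2 : |rinner (a i j) x - rinner (a i j) xstar| ≤ R * ‖x - xstar‖ := by
            have : rinner (a i j) x - rinner (a i j) xstar = inner ℝ (a i j) (x - xstar) := by
              simp [rinner, inner_sub_right]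
            rw [this]
            calc |(inner ℝ (a i j) (x - xstar) : ℝ)| ≤ ‖a i j‖ * ‖x - xstar‖ :=
                abs_real_inner_le_norm _ _
              _ ≤ R * ‖x - xstar‖ :=
                mul_le_mul_of_nonneg_right (hRub i j) (norm_nonneg _)
          have h3 : |φ'' i j (rinner (a i j) x) - φ'' i j (rinner (a i j) xstar)|
              ≤ ν * (R * ‖x - xstar‖) :=
            le_trans h1 (mul_le_mul_of_nonneg_left h2 hν)
          have h4 : 0 ≤ ν * (R * ‖x - xstar‖) :=
            mul_nonneg hν (mul_nonneg hR0 (norm_nonneg _))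
          calc ‖φ'' i j (rinner (a i j) x) - φ'' i j (rinner (a i j) xstar)‖ ^ 2
              = |φ'' i j (rinner (a i j) x) - φ'' i j (rinner (a i j) xstar)| ^ 2 := by
                rw [Real.norm_eq_abs]
            _ ≤ (ν * (R * ‖x - xstar‖)) ^ 2 := by
                apply sq_le_sq' _ h3; linarith [abs_nonneg (φ'' i j (rinner (a i j) x) - φ'' i j (rinner (a i j) xstar))]
            _ = ν ^ 2 * R ^ 2 * ‖x - xstar‖ ^ 2 := by ring
      _ = (m : ℝ) * (ν ^ 2 * R ^ 2 * ‖x - xstar‖ ^ 2) := by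
          rw [Finset.sum_const, Finset.card_univ, Fintype.card_fin, nsmul_eq_mul]
  -- combine
  rw [integral_finset_sum Finset.univ (fun i _ => hI i)]
  have step : ∑ i, (∫ t, ‖(h i + η • g i t) - hvecOf a φ'' i xstar‖ ^ 2 ∂ℙ)
      ≤ ∑ i, ((1 - η) * ‖u i‖ ^ 2 + η * ((m : ℝ) * (ν ^ 2 * R ^ 2 * ‖x - xstar‖ ^ 2))) := by
    apply Finset.sum_le_sum
    intro i _
    refine le_trans (hbound i) ?_
    have := hcomp i
    have := mul_le_mul_of_nonneg_left this (le_of_lt hη0)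
    linarith
  refine le_trans step ?_
  rw [Finset.sum_add_distrib, Finset.sum_const, Finset.card_univ, Fintype.card_fin,
    nsmul_eq_mul, ← Finset.mul_sum]
  simp only [hu]
  apply le_of_eq
  ring
end
end

section
/- Fix x ∈ ℝ^d and reals h_{ij} with |h_{ij}| ≤ γ for all i ∈ [n], j ∈ [m], and set β = max_{i,j} (h_{ij}(x) + 2γ)/(h_{ij} + 2γ). Then for every i, j: | β − ∫_0^1 (h_{ij}(x* + τ(x − x*)) + 2γ)/(h_{ij} + 2γ) dτ | ≤ (2νR/γ) ‖x − x*‖ + (2/γ) max_{i',j'} |h_{i'j'} − h_{i'j'}(x*)|. -/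
open MeasureTheory Filter
open scoped BigOperators

noncomputable section

/-- bound on the deviation of β from the averaged Hessian coefficient ratio. -/
theorem beta_integral_deviation_bound
    {n m d : ℕ} (hn : 0 < n) (hm : 0 < m) (hd : 0 < d)
    (ν γ lam R : ℝ) (hν : 0 ≤ ν) (hγ : 0 < γ) (hlam : 0 ≤ lam)
    (a : Fin n → Fin m → Euc d) (φ : Fin n → Fin m → ℝ → ℝ)
    (φ'' : Fin n → Fin m → ℝ → ℝ) (hφ'' : ∀ i j, φ'' i j = deriv (deriv (φ i j)))
    (hsmooth : ∀ i j, ContDiff ℝ 2 (φ i j))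
    (hbdd : ∀ i j t, |φ'' i j t| ≤ γ)
    (hlip : ∀ i j s t, |φ'' i j s - φ'' i j t| ≤ ν * |s - t|)
    (hRub : ∀ i j, ‖a i j‖ ≤ R) (hRmem : ∃ i j, R = ‖a i j‖)
    (P : Euc d → ℝ)
    (hP : ∀ y, P y = ((n : ℝ) * m)⁻¹ * (∑ i, ∑ j, φ i j (rinner (a i j) y))
        + lam / 2 * ‖y‖ ^ 2)
    (xstar : Euc d) (hmin : ∀ y, P xstar ≤ P y)
    (x : Euc d) (c : Fin n → Fin m → ℝ) (hcγ : ∀ i j, |c i j| ≤ γ)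
    (β : ℝ)
    (hβub : ∀ i j, (φ'' i j (rinner (a i j) x) + 2 * γ) / (c i j + 2 * γ) ≤ β)
    (hβmem : ∃ i j, β = (φ'' i j (rinner (a i j) x) + 2 * γ) / (c i j + 2 * γ))
    (Dm : ℝ)
    (hDub : ∀ i j, |c i j - φ'' i j (rinner (a i j) xstar)| ≤ Dm)
    (hDmem : ∃ i j, Dm = |c i j - φ'' i j (rinner (a i j) xstar)|) :
    ∀ i j,
      |β - ∫ τ in (0:ℝ)..1,
          (φ'' i j (rinner (a i j) (xstar + τ • (x - xstar))) + 2 * γ) / (c i j + 2 * γ)| ≤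
        2 * ν * R / γ * ‖x - xstar‖ + 2 / γ * Dm := by
  intro i j
  obtain ⟨i0, j0, hβ⟩ := hβmem
  have hRnn : 0 ≤ R := by obtain ⟨i', j', h⟩ := hRmem; rw [h]; exact norm_nonneg _
  have hDnn : 0 ≤ Dm := by obtain ⟨i', j', h⟩ := hDmem; rw [h]; exact abs_nonneg _
  have hden : ∀ i' j', γ ≤ c i' j' + 2 * γ := fun i' j' => by
    have h := abs_le.1 (hcγ i' j'); linarith [h.1]
  have hdenpos : ∀ i' j', (0:ℝ) < c i' j' + 2 * γ := fun i' j' =>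
    lt_of_lt_of_le hγ (hden i' j')
  -- Lipschitz-type bound between values at two points
  have hlipv : ∀ i' j' (y z : Euc d),
      |φ'' i' j' (rinner (a i' j') y) - φ'' i' j' (rinner (a i' j') z)| ≤ ν * (R * ‖y - z‖) := by
    intro i' j' y z
    refine (hlip i' j' _ _).trans ?_
    have h1 : rinner (a i' j') y - rinner (a i' j') z = rinner (a i' j') (y - z) := by
      simp [rinner, inner_sub_right]
    rw [h1]
    have h2 : |rinner (a i' j') (y - z)| ≤ ‖a i' j'‖ * ‖y - z‖ := abs_real_inner_le_norm _ _
    have h3 : ‖a i' j'‖ * ‖y - z‖ ≤ R * ‖y - z‖ :=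
      mul_le_mul_of_nonneg_right (hRub i' j') (norm_nonneg _)
    exact mul_le_mul_of_nonneg_left (h2.trans h3) hν
  -- ratio-to-1 bound
  have hratio : ∀ i' j' (y : Euc d),
      |(φ'' i' j' (rinner (a i' j') y) + 2 * γ) / (c i' j' + 2 * γ) - 1| ≤
        |φ'' i' j' (rinner (a i' j') y) - c i' j'| / γ := by
    intro i' j' y
    have hB := hdenpos i' j'
    rw [div_sub_one (ne_of_gt hB), abs_div, abs_of_pos hB]
    have he : φ'' i' j' (rinner (a i' j') y) + 2 * γ - (c i' j' + 2 * γ)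
        = φ'' i' j' (rinner (a i' j') y) - c i' j' := by ring
    rw [he]
    exact div_le_div_of_nonneg_left (abs_nonneg _) hγ (hden i' j')
  have hDsym : ∀ i' j', |φ'' i' j' (rinner (a i' j') xstar) - c i' j'| ≤ Dm := fun i' j' => by
    rw [abs_sub_comm]; exact hDub i' j'
  set u := x - xstar with hu
  -- bound |β - 1|
  have hβ1 : |β - 1| ≤ ν * (R * ‖u‖) / γ + Dm / γ := by
    have hBpos := hdenpos i0 j0
    have hstep : |β - (φ'' i0 j0 (rinner (a i0 j0) xstar) + 2 * γ) / (c i0 j0 + 2 * γ)| ≤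
        ν * (R * ‖u‖) / γ := by
      rw [hβ, div_sub_div_same]
      have he : φ'' i0 j0 (rinner (a i0 j0) x) + 2 * γ
          - (φ'' i0 j0 (rinner (a i0 j0) xstar) + 2 * γ)
          = φ'' i0 j0 (rinner (a i0 j0) x) - φ'' i0 j0 (rinner (a i0 j0) xstar) := by ring
      rw [he, abs_div, abs_of_pos hBpos]
      calc |φ'' i0 j0 (rinner (a i0 j0) x) - φ'' i0 j0 (rinner (a i0 j0) xstar)|
            / (c i0 j0 + 2 * γ)
          ≤ |φ'' i0 j0 (rinner (a i0 j0) x) - φ'' i0 j0 (rinner (a i0 j0) xstar)| / γ :=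
            div_le_div_of_nonneg_left (abs_nonneg _) hγ (hden i0 j0)
        _ ≤ ν * (R * ‖u‖) / γ := by gcongr; exact hlipv i0 j0 x xstar
    have hstep2 : |(φ'' i0 j0 (rinner (a i0 j0) xstar) + 2 * γ) / (c i0 j0 + 2 * γ) - 1|
        ≤ Dm / γ := by
      refine (hratio i0 j0 xstar).trans ?_
      gcongr; exact hDsym i0 j0
    calc |β - 1| ≤ |β - (φ'' i0 j0 (rinner (a i0 j0) xstar) + 2 * γ) / (c i0 j0 + 2 * γ)|
          + |(φ'' i0 j0 (rinner (a i0 j0) xstar) + 2 * γ) / (c i0 j0 + 2 * γ) - 1| :=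
        abs_sub_le _ _ _
      _ ≤ ν * (R * ‖u‖) / γ + Dm / γ := add_le_add hstep hstep2
  -- the integral
  set q : ℝ := rinner (a i j) u with hq
  set s0 : ℝ := rinner (a i j) xstar with hs0
  have hline : ∀ τ : ℝ, rinner (a i j) (xstar + τ • u) = s0 + τ * q := by
    intro τ; simp only [rinner, hq, hs0]; rw [inner_add_right, real_inner_smul_right]
  have hcφ : Continuous (φ'' i j) := by
    have hl : LipschitzWith ⟨ν, hν⟩ (φ'' i j) := LipschitzWith.of_dist_le_mul (fun s t => by
      simp only [Real.dist_eq, NNReal.coe_mk]; exact hlip i j s t)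
    exact hl.continuous
  set F : ℝ → ℝ := fun τ => φ'' i j (s0 + τ * q) with hF
  have hFcont : Continuous F := hcφ.comp (by continuity)
  have hIntF : IntervalIntegrable F volume 0 1 := hFcont.intervalIntegrable 0 1
  have hqb : |q| ≤ R * ‖u‖ := by
    have h2 : |rinner (a i j) u| ≤ ‖a i j‖ * ‖u‖ := abs_real_inner_le_norm _ _
    exact h2.trans (mul_le_mul_of_nonneg_right (hRub i j) (norm_nonneg _))
  -- pointwise bound on the integrand deviation
  have hpt : ∀ τ ∈ Set.uIoc (0:ℝ) 1, ‖F τ - φ'' i j s0‖ ≤ ν * (R * ‖u‖) := by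
    intro τ hτ
    rw [Set.uIoc_of_le (by norm_num : (0:ℝ) ≤ 1)] at hτ
    have hτ1 : |τ| ≤ 1 := by rw [abs_of_pos hτ.1]; exact hτ.2
    have h1 : ‖F τ - φ'' i j s0‖ ≤ ν * |s0 + τ * q - s0| := hlip i j _ _
    have h2 : |s0 + τ * q - s0| = |τ| * |q| := by
      rw [show s0 + τ * q - s0 = τ * q by ring, abs_mul]
    refine h1.trans ?_
    rw [h2]
    have : |τ| * |q| ≤ 1 * (R * ‖u‖) :=
      mul_le_mul hτ1 hqb (abs_nonneg _) (by norm_num)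
    rw [one_mul] at this
    exact mul_le_mul_of_nonneg_left this hν
  have hIb : |(∫ τ in (0:ℝ)..1, F τ) - φ'' i j s0| ≤ ν * (R * ‖u‖) := by
    have heq : (∫ τ in (0:ℝ)..1, F τ) - φ'' i j s0
        = ∫ τ in (0:ℝ)..1, (F τ - φ'' i j s0) := by
      rw [intervalIntegral.integral_sub hIntF (intervalIntegrable_const)]
      simp
    rw [heq]
    have := intervalIntegral.norm_integral_le_of_norm_le_const
      (C := ν * (R * ‖u‖)) (f := fun τ => F τ - φ'' i j s0) (a := 0) (b := 1) hpt
    simpa using this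
  -- express the integral of the ratio
  have hIeq : (∫ τ in (0:ℝ)..1,
        (φ'' i j (rinner (a i j) (xstar + τ • u)) + 2 * γ) / (c i j + 2 * γ))
      = ((∫ τ in (0:ℝ)..1, F τ) + 2 * γ) / (c i j + 2 * γ) := by
    have h1 : (∫ τ in (0:ℝ)..1,
          (φ'' i j (rinner (a i j) (xstar + τ • u)) + 2 * γ) / (c i j + 2 * γ))
        = (∫ τ in (0:ℝ)..1, (F τ + 2 * γ)) / (c i j + 2 * γ) := by
      rw [← intervalIntegral.integral_div]
      congr 1; ext τ; rw [hline τ]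
    rw [h1, intervalIntegral.integral_add hIntF intervalIntegrable_const]
    simp
  set I : ℝ := ∫ τ in (0:ℝ)..1,
      (φ'' i j (rinner (a i j) (xstar + τ • u)) + 2 * γ) / (c i j + 2 * γ) with hIdef
  -- bound on |∫ ratio - 1|
  have hI1 : |I - 1| ≤ ν * (R * ‖u‖) / γ + Dm / γ := by
    rw [hIeq]
    have hBpos := hdenpos i j
    have hstep : |((∫ τ in (0:ℝ)..1, F τ) + 2 * γ) / (c i j + 2 * γ)
        - (φ'' i j s0 + 2 * γ) / (c i j + 2 * γ)| ≤ ν * (R * ‖u‖) / γ := by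
      rw [div_sub_div_same]
      have he : (∫ τ in (0:ℝ)..1, F τ) + 2 * γ - (φ'' i j s0 + 2 * γ)
          = (∫ τ in (0:ℝ)..1, F τ) - φ'' i j s0 := by ring
      rw [he, abs_div, abs_of_pos hBpos]
      calc |(∫ τ in (0:ℝ)..1, F τ) - φ'' i j s0| / (c i j + 2 * γ)
          ≤ |(∫ τ in (0:ℝ)..1, F τ) - φ'' i j s0| / γ :=
            div_le_div_of_nonneg_left (abs_nonneg _) hγ (hden i j)
        _ ≤ ν * (R * ‖u‖) / γ := by gcongr
    have hstep2 : |(φ'' i j s0 + 2 * γ) / (c i j + 2 * γ) - 1| ≤ Dm / γ := by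
      refine (hratio i j xstar).trans ?_
      gcongr; exact hDsym i j
    calc |((∫ τ in (0:ℝ)..1, F τ) + 2 * γ) / (c i j + 2 * γ) - 1|
        ≤ |((∫ τ in (0:ℝ)..1, F τ) + 2 * γ) / (c i j + 2 * γ)
            - (φ'' i j s0 + 2 * γ) / (c i j + 2 * γ)|
          + |(φ'' i j s0 + 2 * γ) / (c i j + 2 * γ) - 1| := abs_sub_le _ _ _
      _ ≤ ν * (R * ‖u‖) / γ + Dm / γ := add_le_add hstep hstep2
  -- combine
  calc |β - I| ≤ |β - 1| + |1 - I| := abs_sub_le _ _ _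
    _ = |β - 1| + |I - 1| := by rw [abs_sub_comm (1:ℝ) I]
    _ ≤ (ν * (R * ‖u‖) / γ + Dm / γ) + (ν * (R * ‖u‖) / γ + Dm / γ) := add_le_add hβ1 hI1
    _ = 2 * ν * R / γ * ‖u‖ + 2 / γ * Dm := by ring
end
end

section
/- Assume P is μ-strongly convex with μ > 0 and ν > 0, R > 0. Let (x^k)_{k≥0} in ℝ^d and reals h_{ij}^k with |h_{ij}^k| ≤ γ satisfy: for every k and every i, j, h_{ij}^k is a convex combination of h_{ij}(x^0), …, h_{ij}(x^k); and x^{k+1} = x^k − (H^k + λ I)^{-1} ∇P(x^k), where β^k = max_{i,j} (h_{ij}(x^k) + 2γ)/(h_{ij}^k + 2γ) and H^k = (1/(nm)) Σ_{i,j} [ β^k (h_{ij}^k + 2γ) − 2γ ] a_{ij} a_{ij}ᵀ. If ‖x^0 − x*‖² ≤ μ²/(432 m n ν² R⁶), then ‖x^k − x*‖² ≤ μ²/(432 m n ν² R⁶) for all k ≥ 0. -/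
open MeasureTheory Filter
open scoped BigOperators

noncomputable section

/- ---------- auxiliary lemmas ---------- -/

lemma gradP_formula {n m d : ℕ} (a : Fin n → Fin m → Euc d) (φ : Fin n → Fin m → ℝ → ℝ)
    (hsmooth : ∀ i j, ContDiff ℝ 2 (φ i j)) (lam : ℝ) (y : Euc d) :
    HasGradientAt (fun z => ((n:ℝ)*m)⁻¹ * (∑ i, ∑ j, φ i j (rinner (a i j) z)) + lam/2 * ‖z‖^2)
      (((n:ℝ)*m)⁻¹ • (∑ i, ∑ j, deriv (φ i j) (rinner (a i j) y) • a i j) + lam • y) y := by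
  rw [hasGradientAt_iff_hasFDerivAt]
  have hφd : ∀ i j t, HasDerivAt (φ i j) (deriv (φ i j) t) t := fun i j t =>
    (((hsmooth i j).differentiable (by norm_num)) t).hasDerivAt
  have hterm : ∀ i j, HasFDerivAt (fun z : Euc d => φ i j (rinner (a i j) z))
      (deriv (φ i j) (rinner (a i j) y) • (innerSL ℝ (a i j))) y := fun i j => by
    have hr : (fun z : Euc d => rinner (a i j) z) = ⇑(innerSL ℝ (a i j)) := by
      funext z; simp [rinner]
    have hl := (innerSL ℝ (a i j)).hasFDerivAt (x := y)
    rw [← hr] at hl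
    exact (hφd i j _).comp_hasFDerivAt y hl
  have hsum : HasFDerivAt (fun z : Euc d => ∑ i, ∑ j, φ i j (rinner (a i j) z))
      (∑ i, ∑ j, deriv (φ i j) (rinner (a i j) y) • innerSL ℝ (a i j)) y := by
    apply HasFDerivAt.fun_sum; intro i _; apply HasFDerivAt.fun_sum; intro j _; exact hterm i j
  have hinner : HasFDerivAt (fun z : Euc d => (inner ℝ z z : ℝ))
      ((fderivInnerCLM ℝ (y,y)).comp ((ContinuousLinearMap.id ℝ (Euc d)).prod
        (ContinuousLinearMap.id ℝ (Euc d)))) y := (hasFDerivAt_id y).inner ℝ (hasFDerivAt_id y)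
  have heq : (fun z : Euc d => ((n:ℝ)*m)⁻¹ * (∑ i, ∑ j, φ i j (rinner (a i j) z)) + lam/2 * ‖z‖^2)
      = fun z => ((n:ℝ)*m)⁻¹ * (∑ i, ∑ j, φ i j (rinner (a i j) z)) + lam/2 * (inner ℝ z z : ℝ) := by
    funext z; rw [real_inner_self_eq_norm_sq]
  rw [heq]
  have total := (hsum.const_mul (((n:ℝ)*m)⁻¹)).add (hinner.const_mul (lam/2))
  refine total.congr_fderiv ?_
  ext v
  simp [InnerProductSpace.toDual_apply_apply, inner_add_left, real_inner_smul_left, sum_inner,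
    ContinuousLinearMap.smul_apply, ContinuousLinearMap.sum_apply, innerSL_apply_apply]
  rw [real_inner_comm y v]; ring

lemma sum3_comm {N n m : ℕ} (f : Fin N → Fin n → Fin m → ℝ) :
    ∑ q, ∑ i, ∑ j, f q i j = ∑ i, ∑ j, ∑ q, f q i j := by
  rw [Finset.sum_comm]
  exact Finset.sum_congr rfl fun i _ => Finset.sum_comm

lemma rinner_eq_sum {d : ℕ} (a v : Euc d) : rinner a v = ∑ q, a q * v q := by
  simp [rinner, PiLp.inner_apply, RCLike.inner_apply, mul_comm]

lemma hmat_mulVec {n m d : ℕ} (a : Fin n → Fin m → Euc d) (e : Fin n → Fin m → ℝ)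
    (v : Euc d) (p : Fin d) :
    ((Hmat a e).mulVec v) p = ((n:ℝ)*m)⁻¹ * ∑ i, ∑ j, e i j * (rinner (a i j) v * a i j p) := by
  simp only [Hmat, Matrix.smul_mulVec, Pi.smul_apply, smul_eq_mul]
  congr 1
  simp only [Matrix.mulVec, Matrix.sum_apply, dotProduct, Finset.sum_apply,
    Matrix.smul_apply, outerMat, smul_eq_mul, Finset.sum_mul]
  rw [sum3_comm (fun q i j => e i j * (a i j p * a i j q) * v q)]
  refine Finset.sum_congr rfl fun i _ => Finset.sum_congr rfl fun j _ => ?_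
  rw [rinner_eq_sum, Finset.sum_mul, Finset.mul_sum]
  exact Finset.sum_congr rfl fun q _ => by ring

lemma hmat_quad {n m d : ℕ} (a : Fin n → Fin m → Euc d) (e : Fin n → Fin m → ℝ) (v : Euc d) :
    dotProduct v ((Hmat a e).mulVec v)
      = ((n:ℝ)*m)⁻¹ * ∑ i, ∑ j, e i j * (rinner (a i j) v)^2 := by
  simp only [dotProduct]
  have per_p : ∀ p, v p * ((Hmat a e).mulVec v) p
      = ((n:ℝ)*m)⁻¹ * ∑ i, ∑ j, e i j * (rinner (a i j) v * a i j p) * v p := by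
    intro p
    rw [hmat_mulVec a e v p, mul_left_comm]
    congr 1
    rw [Finset.mul_sum]
    exact Finset.sum_congr rfl fun i _ => by
      rw [Finset.mul_sum]; exact Finset.sum_congr rfl fun j _ => by ring
  calc ∑ p, v p * ((Hmat a e).mulVec v) p
      = ∑ p, ((n:ℝ)*m)⁻¹ * ∑ i, ∑ j, e i j * (rinner (a i j) v * a i j p) * v p :=
        Finset.sum_congr rfl fun p _ => per_p p
    _ = ((n:ℝ)*m)⁻¹ * ∑ p, ∑ i, ∑ j, e i j * (rinner (a i j) v * a i j p) * v p := by
        rw [← Finset.mul_sum]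
    _ = ((n:ℝ)*m)⁻¹ * ∑ i, ∑ j, ∑ p, e i j * (rinner (a i j) v * a i j p) * v p := by
        rw [sum3_comm (fun p i j => e i j * (rinner (a i j) v * a i j p) * v p)]
    _ = ((n:ℝ)*m)⁻¹ * ∑ i, ∑ j, e i j * (rinner (a i j) v)^2 := by
        congr 1
        refine Finset.sum_congr rfl fun i _ => Finset.sum_congr rfl fun j _ => ?_
        have hp : ∀ p, e i j * (rinner (a i j) v * a i j p) * v p
            = (e i j * rinner (a i j) v) * (a i j p * v p) := fun p => by ring
        rw [Finset.sum_congr rfl fun p _ => hp p, ← Finset.mul_sum, ← rinner_eq_sum]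
        ring

lemma hmat_herm {n m d : ℕ} (a : Fin n → Fin m → Euc d) (e : Fin n → Fin m → ℝ) :
    (Hmat a e).IsHermitian := by
  unfold Matrix.IsHermitian
  ext p q
  simp only [Matrix.conjTranspose_apply, Hmat, Matrix.smul_apply, Matrix.sum_apply,
    outerMat, smul_eq_mul, star_trivial]
  congr 1
  exact Finset.sum_congr rfl fun i _ => Finset.sum_congr rfl fun j _ => by ring

lemma hmat_psd {n m d : ℕ} (a : Fin n → Fin m → Euc d) (e : Fin n → Fin m → ℝ)
    (he : ∀ i j, 0 ≤ e i j) : (Hmat a e).PosSemidef := by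
  refine Matrix.PosSemidef.of_dotProduct_mulVec_nonneg (hmat_herm a e) fun v => ?_
  simp only [star_trivial]
  have hq := hmat_quad a e (WithLp.toLp 2 v)
  simp only [WithLp.ofLp_toLp] at hq
  rw [hq]
  exact mul_nonneg (by positivity) <| Finset.sum_nonneg fun i _ =>
    Finset.sum_nonneg fun j _ => mul_nonneg (he i j) (sq_nonneg _)

lemma hmat_add {n m d : ℕ} (a : Fin n → Fin m → Euc d) (e1 e2 : Fin n → Fin m → ℝ) :
    Hmat a (fun i j => e1 i j + e2 i j) = Hmat a e1 + Hmat a e2 := by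
  unfold Hmat
  rw [← smul_add]
  congr 1
  rw [← Finset.sum_add_distrib]
  refine Finset.sum_congr rfl fun i _ => ?_
  rw [← Finset.sum_add_distrib]
  exact Finset.sum_congr rfl fun j _ => add_smul _ _ _

lemma mvt_second_deriv (φ : ℝ → ℝ) (hs : ContDiff ℝ 2 φ) (ν : ℝ) (hν : 0 ≤ ν)
    (hlip : ∀ s t, |deriv (deriv φ) s - deriv (deriv φ) t| ≤ ν * |s - t|) (b a2 : ℝ) :
    |deriv φ b - deriv φ a2 - deriv (deriv φ) b * (b - a2)| ≤ ν * (b - a2)^2 := by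
  have h2 : (2 : WithTop ℕ∞) = 1 + 1 := by norm_num
  rw [h2] at hs
  have hd1 : Differentiable ℝ (deriv φ) := (contDiff_succ_iff_deriv.mp hs).2.2.differentiable one_ne_zero
  set h := deriv (deriv φ) b with hh
  set g : ℝ → ℝ := fun t => deriv φ t - h * t with hg
  have hder : ∀ t ∈ Set.uIcc a2 b, HasDerivWithinAt g (deriv (deriv φ) t - h) (Set.uIcc a2 b) t := by
    intro t _
    exact (((hd1 t).hasDerivAt).sub (by simpa using (hasDerivAt_id t).const_mul h)).hasDerivWithinAt
  have hbound : ∀ t ∈ Set.uIcc a2 b, ‖deriv (deriv φ) t - h‖ ≤ ν * |b - a2| := by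
    intro t ht
    have h1 : |deriv (deriv φ) t - h| ≤ ν * |t - b| := hlip t b
    have h2' : |t - b| ≤ |b - a2| := by
      rcases le_total a2 b with hab | hab
      · rw [Set.uIcc_of_le hab] at ht
        rw [abs_of_nonpos (by linarith [ht.2] : t - b ≤ 0),
          abs_of_nonneg (by linarith : (0:ℝ) ≤ b - a2)]
        linarith [ht.1]
      · rw [Set.uIcc_of_ge hab] at ht
        rw [abs_of_nonneg (by linarith [ht.1] : 0 ≤ t - b),
          abs_of_nonpos (by linarith : b - a2 ≤ 0)]
        linarith [ht.2]
    calc ‖deriv (deriv φ) t - h‖ = |deriv (deriv φ) t - h| := rfl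
      _ ≤ ν * |t - b| := h1
      _ ≤ ν * |b - a2| := mul_le_mul_of_nonneg_left h2' hν
  have key := Convex.norm_image_sub_le_of_norm_hasDerivWithin_le hder hbound
    (convex_uIcc a2 b) (Set.left_mem_uIcc) (Set.right_mem_uIcc)
  have hgd : g b - g a2 = deriv φ b - deriv φ a2 - h * (b - a2) := by simp only [hg]; ring
  calc |deriv φ b - deriv φ a2 - h * (b - a2)| = ‖g b - g a2‖ := by rw [hgd]; rfl
    _ ≤ ν * |b - a2| * ‖b - a2‖ := key
    _ = ν * (b - a2)^2 := by rw [Real.norm_eq_abs, mul_assoc, ← abs_mul, ← sq, abs_sq]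

lemma mulVecE_sub {d : ℕ} (M : Matrix (Fin d) (Fin d) ℝ) (u v : Euc d) :
    mulVecE M (u - v) = mulVecE M u - mulVecE M v := by
  ext p
  simp only [WithLp.ofLp_toLp, mulVecE, Matrix.mulVec, dotProduct, PiLp.sub_apply, mul_sub,
    Finset.sum_sub_distrib]

lemma dot_eq_rinner {d : ℕ} (u v : Euc d) : dotProduct u v = rinner u v := by
  rw [rinner_eq_sum]; rfl

lemma euc_sum_apply {d : ℕ} {α : Type*} (s : Finset α) (f : α → Euc d) (p : Fin d) :
    (∑ i ∈ s, f i) p = ∑ i ∈ s, f i p := by simp [WithLp.ofLp_sum]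
set_option maxHeartbeats 2000000 in
/-- iterates of NL2 remain in the local neighborhood (Lemma 2). -/
theorem nl2_iterates_stay_in_neighborhood
    {n m d : ℕ} (hn : 0 < n) (hm : 0 < m) (hd : 0 < d)
    (ν γ lam R μ : ℝ) (hν : 0 < ν) (hγ : 0 < γ) (hlam : 0 ≤ lam) (hR : 0 < R) (hμ : 0 < μ)
    (a : Fin n → Fin m → Euc d) (φ : Fin n → Fin m → ℝ → ℝ)
    (φ'' : Fin n → Fin m → ℝ → ℝ) (hφ'' : ∀ i j, φ'' i j = deriv (deriv (φ i j)))
    (hsmooth : ∀ i j, ContDiff ℝ 2 (φ i j))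
    (hbdd : ∀ i j t, |φ'' i j t| ≤ γ)
    (hlip : ∀ i j s t, |φ'' i j s - φ'' i j t| ≤ ν * |s - t|)
    (hRub : ∀ i j, ‖a i j‖ ≤ R) (hRmem : ∃ i j, R = ‖a i j‖)
    (P : Euc d → ℝ)
    (hP : ∀ y, P y = ((n : ℝ) * m)⁻¹ * (∑ i, ∑ j, φ i j (rinner (a i j) y))
        + lam / 2 * ‖y‖ ^ 2)
    (hsc : ∀ y : Euc d,
        (Hmat a (fun i j => φ'' i j (rinner (a i j) y)) +
          lam • (1 : Matrix (Fin d) (Fin d) ℝ) -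
          μ • (1 : Matrix (Fin d) (Fin d) ℝ)).PosSemidef)
    (xstar : Euc d) (hmin : ∀ y, P xstar ≤ P y)
    (x : ℕ → Euc d) (c : Fin n → Fin m → ℕ → ℝ)
    (hcγ : ∀ i j k, |c i j k| ≤ γ)
    (hcc : ∀ k i j, ∃ ρ : ℕ → ℝ, (∀ t, t ≤ k → 0 ≤ ρ t) ∧
        (∑ t ∈ Finset.range (k + 1), ρ t) = 1 ∧
        c i j k = ∑ t ∈ Finset.range (k + 1), ρ t * φ'' i j (rinner (a i j) (x t)))
    (B : ℕ → ℝ)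
    (hBub : ∀ k i j,
        (φ'' i j (rinner (a i j) (x k)) + 2 * γ) / (c i j k + 2 * γ) ≤ B k)
    (hBmem : ∀ k, ∃ i j,
        B k = (φ'' i j (rinner (a i j) (x k)) + 2 * γ) / (c i j k + 2 * γ))
    (hstep : ∀ k, x (k + 1) = x k - mulVecE
        (Hmat a (fun i j => B k * (c i j k + 2 * γ) - 2 * γ) +
          lam • (1 : Matrix (Fin d) (Fin d) ℝ))⁻¹ (gradient P (x k)))
    (h0 : ‖x 0 - xstar‖ ^ 2 ≤ μ ^ 2 / (432 * (m : ℝ) * n * ν ^ 2 * R ^ 6)) :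
    ∀ k, ‖x k - xstar‖ ^ 2 ≤ μ ^ 2 / (432 * (m : ℝ) * n * ν ^ 2 * R ^ 6) := by
  have hn' : (0:ℝ) < n := by exact_mod_cast hn
  have hm' : (0:ℝ) < m := by exact_mod_cast hm
  have hnm : (0:ℝ) < (n:ℝ) * m := mul_pos hn' hm'
  set D : ℝ := μ ^ 2 / (432 * (m : ℝ) * n * ν ^ 2 * R ^ 6) with hD
  have hDpos : 0 < D := div_pos (by positivity) (by positivity)
  set ε : ℝ := Real.sqrt D with hεdef
  have hε2 : ε ^ 2 = D := Real.sq_sqrt hDpos.le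
  have hεpos : 0 < ε := Real.sqrt_pos.mpr hDpos
  have hPfun : P = fun y => ((n:ℝ)*m)⁻¹ * (∑ i, ∑ j, φ i j (rinner (a i j) y)) + lam/2 * ‖y‖^2 :=
    funext hP
  subst hPfun
  have hgrad : ∀ y : Euc d,
      gradient (fun y => ((n:ℝ)*m)⁻¹ * (∑ i, ∑ j, φ i j (rinner (a i j) y)) + lam/2 * ‖y‖^2) y
      = ((n:ℝ)*m)⁻¹ • (∑ i, ∑ j, deriv (φ i j) (rinner (a i j) y) • a i j) + lam • y :=
    fun y => (gradP_formula a φ hsmooth lam y).gradient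
  have hgrad0 : (((n:ℝ)*m)⁻¹ • (∑ i, ∑ j, deriv (φ i j) (rinner (a i j) xstar) • a i j)
      + lam • xstar : Euc d) = 0 := by
    have hloc : IsLocalMin (fun y : Euc d =>
        ((n:ℝ)*m)⁻¹ * (∑ i, ∑ j, φ i j (rinner (a i j) y)) + lam/2 * ‖y‖^2) xstar :=
      Filter.Eventually.of_forall hmin
    have h1 := hloc.hasFDerivAt_eq_zero (gradP_formula a φ hsmooth lam xstar).hasFDerivAt
    exact (LinearIsometryEquiv.map_eq_zero_iff _).mp h1
  -- the inductive claim
  have claim : ∀ k, ∀ t, t ≤ k → ‖x t - xstar‖ ≤ ε := by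
    intro K
    induction K with
    | zero =>
      intro t ht
      interval_cases t
      calc ‖x 0 - xstar‖ = Real.sqrt (‖x 0 - xstar‖^2) := (Real.sqrt_sq (norm_nonneg _)).symm
        _ ≤ Real.sqrt D := Real.sqrt_le_sqrt h0
        _ = ε := rfl
    | succ k IH =>
      intro t ht
      rcases Nat.eq_or_lt_of_le ht with rfl | hlt
      · -- main step
        have hrk : ‖x k - xstar‖ ≤ ε := IH k le_rfl
        set rk := ‖x k - xstar‖ with hrkdef
        have hrknn : 0 ≤ rk := norm_nonneg _
        set w : Fin n → Fin m → ℝ := fun i j => B k * (c i j k + 2 * γ) - 2 * γ with hw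
        set M : Matrix (Fin d) (Fin d) ℝ :=
          Hmat a (fun i j => B k * (c i j k + 2 * γ) - 2 * γ)
            + lam • (1 : Matrix (Fin d) (Fin d) ℝ) with hM
        have hc2γ : ∀ i j, γ ≤ c i j k + 2*γ := fun i j => by
          have := (abs_le.mp (hcγ i j k)).1; linarith
        have hc3γ : ∀ i j, c i j k + 2*γ ≤ 3*γ := fun i j => by
          have := (abs_le.mp (hcγ i j k)).2; linarith
        have hcpos : ∀ i j, (0:ℝ) < c i j k + 2*γ := fun i j => lt_of_lt_of_le hγ (hc2γ i j)
        have hwge : ∀ i j, φ'' i j (rinner (a i j) (x k)) ≤ w i j := by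
          intro i j
          have hb := hBub k i j
          rw [div_le_iff₀ (hcpos i j)] at hb
          simp only [hw]
          nlinarith [hb]
        -- (S1) PSD of M - μ1
        have hpsd : (M - μ • (1 : Matrix (Fin d) (Fin d) ℝ)).PosSemidef := by
          have hdec : M - μ • (1 : Matrix (Fin d) (Fin d) ℝ)
              = Hmat a (fun i j => w i j - φ'' i j (rinner (a i j) (x k)))
                + (Hmat a (fun i j => φ'' i j (rinner (a i j) (x k)))
                   + lam • (1 : Matrix (Fin d) (Fin d) ℝ)
                   - μ • (1 : Matrix (Fin d) (Fin d) ℝ)) := by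
            have h1 : Hmat a w = Hmat a (fun i j =>
                (w i j - φ'' i j (rinner (a i j) (x k))) + φ'' i j (rinner (a i j) (x k))) := by
              apply congrArg (Hmat a); funext i j; simp only [hw]; ring
            rw [hM, ← hw, h1, hmat_add]; abel
          rw [hdec]
          exact (hmat_psd _ _ fun i j => sub_nonneg.mpr (hwge i j)).add (hsc (x k))
        -- (S2) M pos def and invertible
        have hherm1 : (lam • (1 : Matrix (Fin d) (Fin d) ℝ)).IsHermitian := by
          unfold Matrix.IsHermitian
          rw [Matrix.conjTranspose_smul, Matrix.conjTranspose_one]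
          simp
        have hhermM : M.IsHermitian := by
          rw [hM, ← hw]; exact (hmat_herm a w).add hherm1
        have hquadM : ∀ v : Fin d → ℝ, dotProduct v (M.mulVec v)
            = dotProduct v ((M - μ • 1).mulVec v) + μ * dotProduct v v := by
          intro v
          rw [Matrix.sub_mulVec, dotProduct_sub, Matrix.smul_mulVec,
            Matrix.one_mulVec, dotProduct_smul]
          simp only [smul_eq_mul]
          ring
        have hposdef : M.PosDef := by
          refine Matrix.PosDef.of_dotProduct_mulVec_pos hhermM fun v hv => ?_
          simp only [star_trivial]
          rw [hquadM v]
          have h1 := hpsd.dotProduct_mulVec_nonneg v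
          simp only [star_trivial] at h1
          have hnn : 0 ≤ dotProduct v v :=
            Finset.sum_nonneg fun i _ => mul_self_nonneg (v i)
          have hne : dotProduct v v ≠ 0 :=
            fun h => hv ((dotProduct_self_eq_zero).mp h)
          have h2 : 0 < dotProduct v v := lt_of_le_of_ne hnn (Ne.symm hne)
          nlinarith [mul_pos hμ h2]
        have hdet : IsUnit M.det := isUnit_iff_ne_zero.mpr (ne_of_gt hposdef.det_pos)
        have hMinv : M * M⁻¹ = 1 := Matrix.mul_nonsing_inv M hdet
        -- (S3) key coercivity inequality
        have hkey : ∀ u : Euc d, μ * ‖u‖ ≤ ‖mulVecE M u‖ := by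
          intro u
          have h1 := hpsd.dotProduct_mulVec_nonneg u
          simp only [star_trivial] at h1
          have h2 : dotProduct u (M.mulVec u) = rinner u (mulVecE M u) :=
            dot_eq_rinner u (mulVecE M u)
          have hself : dotProduct u u = ‖u‖^2 := by
            rw [dot_eq_rinner]; exact real_inner_self_eq_norm_sq u
          have h3 := hquadM u
          rw [h2, hself] at h3
          have h4 : μ * ‖u‖^2 ≤ rinner u (mulVecE M u) := by linarith
          have h5 : rinner u (mulVecE M u) ≤ ‖u‖ * ‖mulVecE M u‖ := real_inner_le_norm u _
          rcases eq_or_lt_of_le (norm_nonneg u) with h0u | h0u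
          · rw [← h0u]; simpa using norm_nonneg (mulVecE M u)
          · nlinarith
        -- (S4) vector identity
        set coef : Fin n → Fin m → ℝ := fun i j =>
          w i j * (rinner (a i j) (x k) - rinner (a i j) xstar)
            - (deriv (φ i j) (rinner (a i j) (x k)) - deriv (φ i j) (rinner (a i j) xstar))
          with hcoef
        set vE : Euc d := ((n:ℝ)*m)⁻¹ • ∑ i, ∑ j, coef i j • a i j with hvEdef
        have hrsub : ∀ (i : Fin n) (j : Fin m),
            rinner (a i j) (x k - xstar) = rinner (a i j) (x k) - rinner (a i j) xstar :=
          fun i j => by simp [rinner, inner_sub_right]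
        have hiden : mulVecE M (x k - xstar)
            - gradient (fun y => ((n:ℝ)*m)⁻¹ * (∑ i, ∑ j, φ i j (rinner (a i j) y))
                + lam/2 * ‖y‖^2) (x k) = vE := by
          rw [hgrad (x k)]
          ext p
          have h0p := congrArg (fun z : Euc d => z p) hgrad0
          simp only [PiLp.add_apply, PiLp.smul_apply, smul_eq_mul, PiLp.zero_apply,
            euc_sum_apply] at h0p
          have hMu : mulVecE M (x k - xstar) p
              = ((n:ℝ)*m)⁻¹ * (∑ i, ∑ j, w i j *
                  ((rinner (a i j) (x k) - rinner (a i j) xstar) * a i j p))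
                + lam * (x k p - xstar p) := by
            show (M.mulVec (WithLp.ofLp (x k - xstar))) p = _
            rw [hM, Matrix.add_mulVec, Pi.add_apply, Matrix.smul_mulVec, Matrix.one_mulVec,
              Pi.smul_apply, smul_eq_mul, hmat_mulVec]
            congr 1
            simp only [hw]
            congr 1
            exact Finset.sum_congr rfl fun i _ => Finset.sum_congr rfl fun j _ => by
              rw [hrsub i j]
          rw [PiLp.sub_apply, hMu]
          simp only [hvEdef, PiLp.add_apply, PiLp.smul_apply, smul_eq_mul, euc_sum_apply]
          have hsumc : (∑ i, ∑ j, coef i j * a i j p)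
              = (∑ i, ∑ j, w i j * ((rinner (a i j) (x k) - rinner (a i j) xstar) * a i j p))
                - (∑ i, ∑ j, deriv (φ i j) (rinner (a i j) (x k)) * a i j p)
                + (∑ i, ∑ j, deriv (φ i j) (rinner (a i j) xstar) * a i j p) := by
            have hterm : ∀ (i : Fin n) (j : Fin m), coef i j * a i j p
                = w i j * ((rinner (a i j) (x k) - rinner (a i j) xstar) * a i j p)
                  - deriv (φ i j) (rinner (a i j) (x k)) * a i j p
                  + deriv (φ i j) (rinner (a i j) xstar) * a i j p := by
              intro i j; simp only [hcoef]; ring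
            simp only [hterm, Finset.sum_add_distrib, Finset.sum_sub_distrib]
          rw [hsumc]
          linear_combination -h0p
        -- (S5) scalar bounds
        have hΔ : ∀ i j, |rinner (a i j) (x k) - rinner (a i j) xstar| ≤ R * rk := by
          intro i j
          rw [← hrsub i j]
          calc |rinner (a i j) (x k - xstar)| ≤ ‖a i j‖ * ‖x k - xstar‖ :=
                abs_real_inner_le_norm _ _
            _ ≤ R * rk := mul_le_mul_of_nonneg_right (hRub i j) (norm_nonneg _)
        have hcb : ∀ i j, |c i j k - φ'' i j (rinner (a i j) (x k))| ≤ 2*ν*R*ε := by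
          intro i j
          obtain ⟨ρ, hρ0, hρ1, hρc⟩ := hcc k i j
          have hterm : ∀ t ∈ Finset.range (k+1),
              |ρ t * (φ'' i j (rinner (a i j) (x t)) - φ'' i j (rinner (a i j) (x k)))|
              ≤ ρ t * (2*ν*R*ε) := by
            intro t htmem
            have htk : t ≤ k := Finset.mem_range_succ_iff.mp htmem
            have hρnn := hρ0 t htk
            rw [abs_mul, abs_of_nonneg hρnn]
            apply mul_le_mul_of_nonneg_left _ hρnn
            have h1 := hlip i j (rinner (a i j) (x t)) (rinner (a i j) (x k))
            have h2 : rinner (a i j) (x t) - rinner (a i j) (x k)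
                = rinner (a i j) (x t - x k) := by simp [rinner, inner_sub_right]
            have h3 : |rinner (a i j) (x t - x k)| ≤ R * (2*ε) := by
              calc |rinner (a i j) (x t - x k)| ≤ ‖a i j‖ * ‖x t - x k‖ :=
                    abs_real_inner_le_norm _ _
                _ ≤ R * (2*ε) := by
                    apply mul_le_mul (hRub i j) ?_ (norm_nonneg _) hR.le
                    have hxx : x t - x k = (x t - xstar) - (x k - xstar) := by abel
                    rw [hxx]
                    calc ‖(x t - xstar) - (x k - xstar)‖
                        ≤ ‖x t - xstar‖ + ‖x k - xstar‖ := norm_sub_le _ _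
                      _ ≤ ε + ε := add_le_add (IH t htk) (IH k le_rfl)
                      _ = 2*ε := by ring
            calc |φ'' i j (rinner (a i j) (x t)) - φ'' i j (rinner (a i j) (x k))|
                ≤ ν * |rinner (a i j) (x t) - rinner (a i j) (x k)| := h1
              _ ≤ ν * (R * (2*ε)) := by
                  rw [h2]; exact mul_le_mul_of_nonneg_left h3 hν.le
              _ = 2*ν*R*ε := by ring
          have hdiff : c i j k - φ'' i j (rinner (a i j) (x k))
              = ∑ t ∈ Finset.range (k+1),
                  ρ t * (φ'' i j (rinner (a i j) (x t)) - φ'' i j (rinner (a i j) (x k))) := by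
            rw [hρc]
            rw [Finset.sum_congr rfl (fun t _ => mul_sub (ρ t) _ _), Finset.sum_sub_distrib,
              ← Finset.sum_mul, hρ1]
            ring
          rw [hdiff]
          calc |∑ t ∈ Finset.range (k+1),
                  ρ t * (φ'' i j (rinner (a i j) (x t)) - φ'' i j (rinner (a i j) (x k)))|
              ≤ ∑ t ∈ Finset.range (k+1),
                  |ρ t * (φ'' i j (rinner (a i j) (x t)) - φ'' i j (rinner (a i j) (x k)))| :=
                Finset.abs_sum_le_sum_abs _ _
            _ ≤ ∑ t ∈ Finset.range (k+1), ρ t * (2*ν*R*ε) := Finset.sum_le_sum hterm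
            _ = (∑ t ∈ Finset.range (k+1), ρ t) * (2*ν*R*ε) := by rw [Finset.sum_mul]
            _ = 2*ν*R*ε := by rw [hρ1]; ring
        obtain ⟨pp, qq, hBk⟩ := hBmem k
        have hB1 : |B k - 1| ≤ 2*ν*R*ε/γ := by
          have hdd : B k - 1
              = (φ'' pp qq (rinner (a pp qq) (x k)) - c pp qq k)/(c pp qq k + 2*γ) := by
            have hne : c pp qq k + 2*γ ≠ 0 := (hcpos pp qq).ne'
            rw [hBk]
            field_simp
            ring
          rw [hdd, abs_div]
          apply div_le_div₀ (by positivity) ?_ hγ ?_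
          · rw [abs_sub_comm]; exact hcb pp qq
          · rw [abs_of_pos (hcpos pp qq)]; exact hc2γ pp qq
        have hwb : ∀ i j, |w i j - φ'' i j (rinner (a i j) (x k))| ≤ 8*ν*R*ε := by
          intro i j
          have hid : w i j - φ'' i j (rinner (a i j) (x k))
              = (B k - 1) * (c i j k + 2*γ) + (c i j k - φ'' i j (rinner (a i j) (x k))) := by
            simp only [hw]; ring
          rw [hid]
          have h1 : |(B k - 1) * (c i j k + 2*γ)| ≤ (2*ν*R*ε/γ) * (3*γ) := by
            rw [abs_mul]
            apply mul_le_mul hB1 ?_ (abs_nonneg _) (by positivity)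
            rw [abs_of_pos (hcpos i j)]; exact hc3γ i j
          have h2 : (2*ν*R*ε/γ) * (3*γ) = 6*(ν*R*ε) := by field_simp; ring
          calc |(B k - 1) * (c i j k + 2*γ) + (c i j k - φ'' i j (rinner (a i j) (x k)))|
              ≤ |(B k - 1) * (c i j k + 2*γ)| + |c i j k - φ'' i j (rinner (a i j) (x k))| :=
                abs_add_le _ _
            _ ≤ 6*(ν*R*ε) + 2*ν*R*ε := add_le_add (h2 ▸ h1) (hcb i j)
            _ = 8*ν*R*ε := by ring
        have hmvt : ∀ i j, |deriv (φ i j) (rinner (a i j) (x k)) - deriv (φ i j) (rinner (a i j) xstar)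
            - φ'' i j (rinner (a i j) (x k)) * (rinner (a i j) (x k) - rinner (a i j) xstar)|
            ≤ ν * (rinner (a i j) (x k) - rinner (a i j) xstar)^2 := by
          intro i j
          have hlip' : ∀ s t, |deriv (deriv (φ i j)) s - deriv (deriv (φ i j)) t| ≤ ν * |s - t| := by
            intro s t; rw [← hφ'' i j]; exact hlip i j s t
          have hh := mvt_second_deriv (φ i j) (hsmooth i j) ν hν.le hlip'
            (rinner (a i j) (x k)) (rinner (a i j) xstar)
          rwa [← hφ'' i j] at hh
        have hcoefb : ∀ i j, |coef i j| ≤ 9*ν*R^2*ε*rk := by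
          intro i j
          have hid : coef i j = (w i j - φ'' i j (rinner (a i j) (x k)))
                * (rinner (a i j) (x k) - rinner (a i j) xstar)
              + (φ'' i j (rinner (a i j) (x k))
                  * (rinner (a i j) (x k) - rinner (a i j) xstar)
                 - (deriv (φ i j) (rinner (a i j) (x k))
                    - deriv (φ i j) (rinner (a i j) xstar))) := by
            simp only [hcoef]; ring
          have h1 : |(w i j - φ'' i j (rinner (a i j) (x k)))
                * (rinner (a i j) (x k) - rinner (a i j) xstar)| ≤ (8*ν*R*ε) * (R*rk) := by
            rw [abs_mul]
            exact mul_le_mul (hwb i j) (hΔ i j) (abs_nonneg _) (by positivity)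
          have h2 : |φ'' i j (rinner (a i j) (x k))
                  * (rinner (a i j) (x k) - rinner (a i j) xstar)
                 - (deriv (φ i j) (rinner (a i j) (x k))
                    - deriv (φ i j) (rinner (a i j) xstar))|
              ≤ ν * (rinner (a i j) (x k) - rinner (a i j) xstar)^2 := by
            rw [abs_sub_comm]
            exact hmvt i j
          have h3 : ν * (rinner (a i j) (x k) - rinner (a i j) xstar)^2 ≤ ν*(R^2*rk*ε) := by
            have hΔb := hΔ i j
            have hΔsq : (rinner (a i j) (x k) - rinner (a i j) xstar)^2 ≤ R^2 * rk^2 := by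
              nlinarith [abs_nonneg (rinner (a i j) (x k) - rinner (a i j) xstar),
                sq_abs (rinner (a i j) (x k) - rinner (a i j) xstar)]
            have hstep2 : R^2 * rk^2 ≤ R^2*rk*ε := by
              nlinarith [mul_le_mul_of_nonneg_left hrk (mul_nonneg (sq_nonneg R) hrknn)]
            exact mul_le_mul_of_nonneg_left (le_trans hΔsq hstep2) hν.le
          calc |coef i j| ≤ (8*ν*R*ε) * (R*rk) + ν*(R^2*rk*ε) := by
                rw [hid]
                exact le_trans (abs_add_le _ _) (add_le_add h1 (le_trans (h2) h3))
            _ = 9*ν*R^2*ε*rk := by ring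
        -- (S6) norm bound on vE
        have hvEb : ‖vE‖ ≤ 9*ν*R^3*ε*rk := by
          have h2s : ‖∑ i, ∑ j, coef i j • (a i j : Euc d)‖ ≤ ∑ i, ∑ j, |coef i j| * ‖a i j‖ :=
            calc ‖∑ i, ∑ j, coef i j • (a i j : Euc d)‖
                ≤ ∑ i, ‖∑ j, coef i j • (a i j : Euc d)‖ := norm_sum_le _ _
              _ ≤ ∑ i, ∑ j, ‖coef i j • (a i j : Euc d)‖ :=
                  Finset.sum_le_sum fun i _ => norm_sum_le _ _
              _ = ∑ i, ∑ j, |coef i j| * ‖a i j‖ := by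
                  simp [norm_smul, Real.norm_eq_abs]
          have h3s : (∑ i, ∑ j, |coef i j| * ‖a i j‖)
              ≤ ∑ _i : Fin n, ∑ _j : Fin m, (9*ν*R^2*ε*rk) * R :=
            Finset.sum_le_sum fun i _ => Finset.sum_le_sum fun j _ =>
              mul_le_mul (hcoefb i j) (hRub i j) (norm_nonneg _) (by positivity)
          have h4s : (∑ _i : Fin n, ∑ _j : Fin m, (9*ν*R^2*ε*rk) * R)
              = (n:ℝ)*((m:ℝ)*((9*ν*R^2*ε*rk) * R)) := by
            simp [Finset.sum_const, Finset.card_univ, nsmul_eq_mul]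
          calc ‖vE‖ = |((n:ℝ)*m)⁻¹| * ‖∑ i, ∑ j, coef i j • (a i j : Euc d)‖ := by
                rw [hvEdef, norm_smul, Real.norm_eq_abs]
            _ ≤ |((n:ℝ)*m)⁻¹| * ((n:ℝ)*((m:ℝ)*((9*ν*R^2*ε*rk) * R))) := by
                apply mul_le_mul_of_nonneg_left _ (abs_nonneg _)
                rw [← h4s]
                exact le_trans h2s h3s
            _ = 9*ν*R^3*ε*rk := by
                rw [abs_of_pos (by positivity : (0:ℝ) < (((n:ℝ)*m)⁻¹))]
                field_simp
        -- (S7) contraction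
        have h9 : 9*ν*R^3*ε ≤ μ := by
          have hm1 : (1:ℝ) ≤ (m:ℝ) := by exact_mod_cast hm
          have hn1 : (1:ℝ) ≤ (n:ℝ) := by exact_mod_cast hn
          have hE : (9*ν*R^3*ε)^2 ≤ μ^2 := by
            have hq : (9*ν*R^3*ε)^2 = 81*ν^2*R^6*ε^2 := by ring
            rw [hq, hε2, hD]
            calc 81*ν^2*R^6*(μ^2/(432*(m:ℝ)*n*ν^2*R^6))
                ≤ (432*(m:ℝ)*n*ν^2*R^6)*(μ^2/(432*(m:ℝ)*n*ν^2*R^6)) := by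
                  apply mul_le_mul_of_nonneg_right _ (by positivity)
                  have hx1 : (1:ℝ) ≤ (m:ℝ)*n := by nlinarith
                  have hx2 : ν^2*R^6 ≤ (m:ℝ)*n*(ν^2*R^6) :=
                    le_mul_of_one_le_left (by positivity) hx1
                  nlinarith [hx2, (by positivity : (0:ℝ) ≤ ν^2*R^6)]
              _ = μ^2 := by field_simp
          have hsum9 : 0 < 9*ν*R^3*ε + μ := by positivity
          nlinarith [hE, hsum9]
        have hwv : mulVecE M (x (k+1) - xstar) = vE := by
          have hx : x (k+1) - xstar = (x k - xstar) - mulVecE M⁻¹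
              (gradient (fun y => ((n:ℝ)*m)⁻¹ * (∑ i, ∑ j, φ i j (rinner (a i j) y))
                + lam/2 * ‖y‖^2) (x k)) := by
            rw [hstep k, ← hM]
            abel
          rw [hx, mulVecE_sub, ← hiden]
          congr 1
          show WithLp.toLp 2 (M.mulVec (M⁻¹.mulVec _)) = _
          rw [Matrix.mulVec_mulVec, hMinv, Matrix.one_mulVec]
        have hfin : ‖x (k+1) - xstar‖ ≤ rk := by
          have h1 := hkey (x (k+1) - xstar)
          rw [hwv] at h1
          have h2 : μ * ‖x (k+1) - xstar‖ ≤ 9*ν*R^3*ε*rk := le_trans h1 hvEb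
          have h3 : 9*ν*R^3*ε*rk ≤ μ * rk := mul_le_mul_of_nonneg_right h9 hrknn
          exact le_of_mul_le_mul_left (le_trans h2 h3) hμ
        exact le_trans hfin hrk
      · exact IH t (Nat.lt_succ_iff.mp hlt)
  intro k
  have hk := claim k k le_rfl
  calc ‖x k - xstar‖ ^ 2 ≤ ε ^ 2 := by
        have := pow_le_pow_left₀ (norm_nonneg (x k - xstar)) hk 2
        exact this
    _ = D := hε2
end
end
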